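/- arXiv:1912.09804 — 7 statements merged into one kernel-verified Lean document; each statement's English description precedes it below -/
import Mathlib

section
/- Let C be an [n,k]_q linear code with generator matrix G and associated multiset of points 𝒫 in 𝔽_q^k. A nonzero codeword c ∈ C is minimal if and only if the linear span of the points of 𝒫 contained in the hyperplane H_c equals H_c, i.e., if and only if dim ⟨𝒫 ∩ H_c⟩ = k − 1. -/
open scoped Classical
open Matrix

/-- The support of a word. -/
def wordSupp {F : Type} [Field F] {n : ℕ} (c : Fin n → F) : Set (Fin n) :=
  {i | c i ≠ 0}

/-- A nonzero codeword of `C` is minimal if no nonzero codeword of `C` has support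
properly contained in its support. -/
def IsMinimalCodeword {F : Type} [Field F] {n : ℕ}
    (C : Submodule F (Fin n → F)) (c : Fin n → F) : Prop :=
  c ∈ C ∧ c ≠ 0 ∧ ∀ c' ∈ C, c' ≠ 0 → ¬ wordSupp c' ⊂ wordSupp c

/-- The number of minimal codewords of `C`, counted up to equivalence (i.e. up to
multiplication by a nonzero scalar). -/
noncomputable def numMinimal {F : Type} [Field F] {n : ℕ}
    (C : Submodule F (Fin n → F)) : ℕ :=
  Nat.card (Quot (fun c c' : {c : Fin n → F // IsMinimalCodeword C c} =>
    ∃ a : Fˣ, a • c.1 = c'.1))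

/-- A code is projective if no coordinate vanishes identically and no two distinct
coordinates agree up to a nonzero scalar factor on all of `C`. -/
def IsProjective {F : Type} [Field F] {n : ℕ} (C : Submodule F (Fin n → F)) : Prop :=
  (∀ i : Fin n, ∃ c ∈ C, c i ≠ 0) ∧
  ∀ i j : Fin n, i ≠ j → ¬ ∃ a : F, a ≠ 0 ∧ ∀ c ∈ C, c j = a * c i

/-- `mMin F n k` : the minimum of `numMinimal C` over all projective `[n,k]` codes over `F`. -/
noncomputable def mMin (F : Type) [Field F] [Fintype F] (n k : ℕ) : ℕ :=
  sInf {m | ∃ C : Submodule F (Fin n → F),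
    Module.finrank F C = k ∧ IsProjective C ∧ numMinimal C = m}

/-- `alphaQ F k r` : minimum cardinality of a set `S` of points (1-dimensional subspaces)
of `F^k` for which there are `r` distinct hyperplanes `H i` and codimension-2 subspaces
`U i ≤ H i` such that every point lying on some `H i` but not on `U i` belongs to `S`. -/
noncomputable def alphaQ (F : Type) [Field F] [Fintype F] (k r : ℕ) : ℕ :=
  sInf {m | ∃ S : Set (Submodule F (Fin k → F)), S.ncard = m ∧
    ∃ H U : Fin r → Submodule F (Fin k → F),
      Function.Injective H ∧
      (∀ i, Module.finrank F (H i) = k - 1) ∧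
      (∀ i, Module.finrank F (U i) = k - 2) ∧
      (∀ i, U i ≤ H i) ∧
      ∀ P : Submodule F (Fin k → F), Module.finrank F P = 1 →
        (∃ i, P ≤ H i ∧ ¬ P ≤ U i) → P ∈ S}

/-- The minimum Hamming weight of a code. -/
noncomputable def minDist {F : Type} [Field F] {n : ℕ} (C : Submodule F (Fin n → F)) : ℕ :=
  sInf {w | ∃ c ∈ C, c ≠ 0 ∧ (wordSupp c).ncard = w}

/-- The support of a subcode. -/
def subcodeSupp {F : Type} [Field F] {n : ℕ} (D : Submodule F (Fin n → F)) : Set (Fin n) :=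
  {i | ∃ v ∈ D, v i ≠ 0}

/-- An `l`-dimensional subcode `D` of `C` is support-minimal if no `l`-dimensional subcode
of `C` has support properly contained in `supp D`. -/
def IsSupportMinimal {F : Type} [Field F] {n : ℕ}
    (C D : Submodule F (Fin n → F)) (l : ℕ) : Prop :=
  D ≤ C ∧ Module.finrank F D = l ∧
  ∀ D' : Submodule F (Fin n → F), D' ≤ C → Module.finrank F D' = l →
    ¬ subcodeSupp D' ⊂ subcodeSupp D

/-- The `l`-th generalized Hamming weight of `C`. -/
noncomputable def genWeight {F : Type} [Field F] {n : ℕ}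
    (C : Submodule F (Fin n → F)) (l : ℕ) : ℕ :=
  sInf {w | ∃ D : Submodule F (Fin n → F), D ≤ C ∧ Module.finrank F D = l ∧
    (subcodeSupp D).ncard = w}

/-- The number of support-minimal `l`-dimensional subcodes of `C`. -/
noncomputable def numSupportMinimal {F : Type} [Field F] {n : ℕ}
    (C : Submodule F (Fin n → F)) (l : ℕ) : ℕ :=
  Nat.card {D : Submodule F (Fin n → F) // IsSupportMinimal C D l}

/-- The Gaussian binomial coefficient `[k choose l]_q`. -/
def gaussBinom (q k l : ℕ) : ℕ :=
  (∏ i ∈ Finset.range l, (q ^ (k - i) - 1)) / (∏ i ∈ Finset.range l, (q ^ (i + 1) - 1))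

/-- `alphaL F k l r` : the analogue of `alphaQ` for codimension `l`. -/
noncomputable def alphaL (F : Type) [Field F] [Fintype F] (k l r : ℕ) : ℕ :=
  sInf {m | ∃ S : Set (Submodule F (Fin k → F)), S.ncard = m ∧
    ∃ W U : Fin r → Submodule F (Fin k → F),
      Function.Injective W ∧
      (∀ i, Module.finrank F (W i) = k - l) ∧
      (∀ i, Module.finrank F (U i) = k - (l + 1)) ∧
      (∀ i, U i ≤ W i) ∧
      ∀ P : Submodule F (Fin k → F), Module.finrank F P = 1 →
        (∃ i, P ≤ W i ∧ ¬ P ≤ U i) → P ∈ S}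


open Module Submodule

section aux
variable {F : Type} [Field F] {k : ℕ}

private def dotL (m : Fin k → F) : (Fin k → F) →ₗ[F] F where
  toFun x := dotProduct m x
  map_add' x y := by simp [dotProduct_add]
  map_smul' a x := by simp [dotProduct_smul]

private lemma dotL_apply (m x : Fin k → F) : dotL m x = dotProduct m x := rfl

private lemma finrank_ker_dotL {m : Fin k → F} (hm : m ≠ 0) :
    finrank F (LinearMap.ker (dotL m)) = k - 1 := by
  obtain ⟨j, hj⟩ : ∃ j, m j ≠ 0 := by
    by_contra h; push_neg at h; exact hm (funext h)
  have hsurj : Function.Surjective (dotL m) := by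
    intro a
    refine ⟨Pi.single j ((m j)⁻¹ * a), ?_⟩
    rw [dotL_apply, dotProduct_single]
    field_simp
  have h1 := (dotL m).finrank_range_add_finrank_ker
  rw [LinearMap.range_eq_top.mpr hsurj, finrank_top, Module.finrank_self,
    Module.finrank_fin_fun] at h1
  omega

private lemma dot_repr (f : Module.Dual F (Fin k → F)) (x : Fin k → F) :
    f x = dotProduct x (fun j => f (Pi.single j 1)) := by
  conv_lhs => rw [← Finset.univ_sum_single x]
  rw [map_sum, dotProduct]
  refine Finset.sum_congr rfl fun j _ => ?_
  have h : Pi.single j (x j) = x j • (Pi.single j 1 : Fin k → F) := by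
    ext l; by_cases hl : l = j <;> simp [Pi.single_apply, hl]
  rw [h, _root_.map_smul, smul_eq_mul]

private lemma exists_dot_ann {W : Submodule F (Fin k → F)} (hW : finrank F W < k) :
    ∃ m' : Fin k → F, m' ≠ 0 ∧ ∀ x ∈ W, dotProduct m' x = 0 := by
  have hlt : W < ⊤ := Submodule.lt_top_of_finrank_lt_finrank (by
    rwa [Module.finrank_fin_fun])
  obtain ⟨f, hf0, hf⟩ := Submodule.exists_dual_map_eq_bot_of_lt_top hlt inferInstance
  refine ⟨fun j => f (Pi.single j 1), ?_, ?_⟩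
  · intro h
    apply hf0
    refine LinearMap.ext fun x => ?_
    rw [dot_repr f x, h]
    simp
  · intro x hx
    have : f x ∈ W.map f := Submodule.mem_map_of_mem hx
    rw [hf, Submodule.mem_bot] at this
    rw [dotProduct_comm]
    rw [dot_repr f x] at this
    exact this

end aux

/-- A nonzero codeword `c = m ᵥ* G` of the `[n,k]_q` code generated by `G`
is minimal iff the span of the points of the associated multiset `𝒫` (the columns of `G`)
lying on the hyperplane `H_c = {x | m ⬝ᵥ x = 0}` has dimension `k - 1`,
i.e. equals `H_c`. -/
theorem statement_0 {F : Type} [Field F] [Fintype F] {n k : ℕ}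
    (G : Matrix (Fin k) (Fin n) F)
    (hrank : Module.finrank F (LinearMap.range G.vecMulLinear) = k)
    (m : Fin k → F) (hm : m ≠ 0) :
    IsMinimalCodeword (LinearMap.range G.vecMulLinear) (Matrix.vecMul m G) ↔
      Module.finrank F (Submodule.span F
        {x : Fin k → F | (∃ i : Fin n, x = Gᵀ i) ∧ dotProduct m x = 0}) = k - 1 := by
  classical
  have hker : LinearMap.ker G.vecMulLinear = ⊥ := by
    have h1 := G.vecMulLinear.finrank_range_add_finrank_ker
    rw [hrank, Module.finrank_fin_fun] at h1
    exact Submodule.finrank_eq_zero.mp (by omega)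
  have hinj : ∀ m' : Fin k → F, Matrix.vecMul m' G = 0 → m' = 0 := by
    intro m' h
    have : m' ∈ LinearMap.ker G.vecMulLinear := by
      rw [LinearMap.mem_ker, Matrix.vecMulLinear_apply]; exact h
    rwa [hker, Submodule.mem_bot] at this
  have hcoord : ∀ (m' : Fin k → F) (i : Fin n),
      Matrix.vecMul m' G i = dotProduct m' (Gᵀ i) := by
    intro m' i; rfl
  set S := Submodule.span F
    {x : Fin k → F | (∃ i : Fin n, x = Gᵀ i) ∧ dotProduct m x = 0} with hSdef
  have hSH : S ≤ LinearMap.ker (dotL m) := by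
    rw [hSdef, Submodule.span_le]
    rintro x ⟨-, hx⟩
    exact hx
  have hH : Module.finrank F (LinearMap.ker (dotL m)) = k - 1 := finrank_ker_dotL hm
  have hSle : Module.finrank F S ≤ k - 1 := hH ▸ Submodule.finrank_mono hSH
  have hc0 : Matrix.vecMul m G ≠ 0 := fun h => hm (hinj m h)
  have hmemsupp : ∀ (c : Fin n → F) (i : Fin n), i ∈ wordSupp c ↔ c i ≠ 0 := fun _ _ => Iff.rfl
  constructor
  · intro hmin
    by_contra hne
    have hSlt : Module.finrank F S < k - 1 := lt_of_le_of_ne hSle hne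
    obtain ⟨i0, hi0⟩ : ∃ i0, Matrix.vecMul m G i0 ≠ 0 := Function.ne_iff.mp hc0
    have hW : Module.finrank F ↥(S ⊔ Submodule.span F {Gᵀ i0}) < k := by
      have h3 := Submodule.finrank_sup_add_finrank_inf_eq S (Submodule.span F {Gᵀ i0})
      have h4 : Module.finrank F (Submodule.span F ({Gᵀ i0} : Set (Fin k → F))) = 1 := by
        apply finrank_span_singleton
        intro h0
        apply hi0
        rw [hcoord, h0, dotProduct_zero]
      omega
    obtain ⟨m', hm'0, hm'ann⟩ := exists_dot_ann hW
    have hc'0 : Matrix.vecMul m' G ≠ 0 := fun h => hm'0 (hinj m' h)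
    refine hmin.2.2 (Matrix.vecMul m' G) ⟨m', rfl⟩ hc'0 ⟨?_, ?_⟩
    · intro i hi
      rw [hmemsupp] at hi ⊢
      intro hci
      apply hi
      rw [hcoord]
      exact hm'ann _ (le_sup_left (a := S) (Submodule.subset_span ⟨⟨i, rfl⟩, by
        rw [← hcoord]; exact hci⟩))
    · intro hsub
      have h0 : Matrix.vecMul m' G i0 = 0 := by
        rw [hcoord]
        exact hm'ann _ (le_sup_right (b := Submodule.span F {Gᵀ i0})
          (Submodule.mem_span_singleton_self _))
      exact (hsub hi0) h0
  · intro hS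
    have hSeq : S = LinearMap.ker (dotL m) :=
      Submodule.eq_of_le_of_finrank_eq hSH (by rw [hS, hH])
    refine ⟨⟨m, rfl⟩, hc0, ?_⟩
    rintro c' ⟨m', rfl⟩ hc' hss
    have hm'0 : m' ≠ 0 := fun h => hc' (by rw [h]; exact Matrix.zero_vecMul G)
    have hker' : LinearMap.ker (dotL m) ≤ LinearMap.ker (dotL m') := by
      rw [← hSeq, hSdef, Submodule.span_le]
      rintro x ⟨⟨i, rfl⟩, hx⟩
      have hci : Matrix.vecMul m G i = 0 := by rw [hcoord]; exact hx
      have hci' : Matrix.vecMul m' G i = 0 := by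
        by_contra h
        exact (hss.subset h) hci
      rw [hcoord] at hci'
      exact hci'
    have heq : LinearMap.ker (dotL m) = LinearMap.ker (dotL m') :=
      Submodule.eq_of_le_of_finrank_eq hker' (by rw [hH, finrank_ker_dotL hm'0])
    apply hss.2
    intro i hi
    rw [hmemsupp] at hi ⊢
    intro h
    apply hi
    have hx : Gᵀ i ∈ LinearMap.ker (dotL m') := by
      rw [LinearMap.mem_ker, dotL_apply, ← hcoord]; exact h
    rw [← heq, LinearMap.mem_ker, dotL_apply, ← hcoord] at hx
    exact hx
end

section
/- Let C be an [n,k]_q linear code with minimum Hamming weight d. If c ∈ C is a minimal codeword, then d ≤ wt(c) ≤ n − k + 1. -/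
open scoped Classical
open Matrix

set_option synthInstance.maxHeartbeats 1000000 in
set_option maxHeartbeats 1000000 in
/-- if `c` is a minimal codeword of an `[n,k]_q` code `C` with minimum
Hamming weight `d`, then `d ≤ wt(c) ≤ n - k + 1`. -/
theorem statement_1 {F : Type} [Field F] [Fintype F] {n k : ℕ}
    (C : Submodule F (Fin n → F)) (hk : Module.finrank F C = k)
    (c : Fin n → F) (hc : IsMinimalCodeword C c) :
    minDist C ≤ (wordSupp c).ncard ∧ (wordSupp c).ncard ≤ n - k + 1 := by
  obtain ⟨hcC, hc0, hmin⟩ := hc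
  refine ⟨Nat.sInf_le ⟨c, hcC, hc0, rfl⟩, ?_⟩
  set S : Set (Fin n) := wordSupp c with hS
  obtain ⟨i₀, hi₀⟩ : ∃ i, c i ≠ 0 := by
    by_contra h; push_neg at h; exact hc0 (funext h)
  have hi₀S : i₀ ∈ S := hi₀
  -- key uniqueness fact
  have key : ∀ v ∈ C, (∀ i, i ∉ S → v i = 0) → v i₀ = 0 → v = 0 := by
    intro v hv hsupp hvi
    by_contra hv0
    refine hmin v hv hv0 ⟨?_, ?_⟩
    · intro i hi
      by_contra hiS
      exact hi (hsupp i hiS)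
    · intro hsub
      exact (hsub hi₀S) hvi
  let π : (Fin n → F) →ₗ[F] (↥(Sᶜ) → F) :=
    LinearMap.funLeft F F (fun i : ↥(Sᶜ) => (i : Fin n))
  let f : C →ₗ[F] (↥(Sᶜ) → F) := π.comp C.subtype
  let e : (LinearMap.ker f) →ₗ[F] F :=
    (LinearMap.proj i₀).comp (C.subtype.comp (LinearMap.ker f).subtype)
  have he : Function.Injective e := by
    rw [injective_iff_map_eq_zero]
    intro v hv
    have hvC : (v : C) ∈ LinearMap.ker f := v.2
    rw [LinearMap.mem_ker] at hvC
    have hsupp : ∀ i, i ∉ S → ((v : C) : Fin n → F) i = 0 := by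
      intro i hi
      exact congrFun hvC ⟨i, hi⟩
    have hvi : ((v : C) : Fin n → F) i₀ = 0 := hv
    have := key _ (v : C).2 hsupp hvi
    ext
    exact congrFun this _
  have hker : Module.finrank F (LinearMap.ker f) ≤ 1 := by
    have := LinearMap.finrank_le_finrank_of_injective he
    simpa using this
  have hrange : Module.finrank F (LinearMap.range f) ≤ Fintype.card ↥(Sᶜ) := by
    have h1 : Module.finrank F (LinearMap.range f) ≤ Module.finrank F (↥(Sᶜ) → F) :=
      Submodule.finrank_le _
    simpa [Module.finrank_fintype_fun_eq_card] using h1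
  have hrn : Module.finrank F (LinearMap.range f) + Module.finrank F (LinearMap.ker f)
      = Module.finrank F C := LinearMap.finrank_range_add_finrank_ker f
  have hcompl : S.ncard + Fintype.card ↥(Sᶜ) = n := by
    have := Set.ncard_add_ncard_compl S
    rwa [← Nat.card_coe_set_eq Sᶜ, Nat.card_eq_fintype_card, Nat.card_eq_fintype_card,
      Fintype.card_fin] at this
  rw [hk] at hrn
  omega
end

section
/- For every [n,k]_q linear code C with k ≥ 1, the number of minimal codewords counted up to equivalence satisfies M(C) ≤ C(n, k−1) (the binomial coefficient n choose k−1). -/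
open scoped Classical
open Matrix

-- Step 1: the subcode of codewords vanishing where c vanishes is spanned by c.
lemma minimal_vanish {F : Type} [Field F] {n : ℕ}
    (C : Submodule F (Fin n → F)) {c : Fin n → F} (hc : IsMinimalCodeword C c) :
    ∀ x ∈ C, (∀ i, c i = 0 → x i = 0) → ∃ a : F, x = a • c := by
  obtain ⟨hcC, hc0, hmin⟩ := hc
  intro x hx hxz
  by_cases hx0 : x = 0
  · exact ⟨0, by simp [hx0]⟩
  have hsub : wordSupp x ⊆ wordSupp c := by
    intro i hi
    simp only [wordSupp, Set.mem_setOf_eq] at hi ⊢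
    intro hci
    exact hi (hxz i hci)
  have heq : wordSupp x = wordSupp c := by
    by_contra hne
    exact hmin x hx hx0 (ssubset_iff_subset_ne.mpr ⟨hsub, hne⟩)
  obtain ⟨i, hci⟩ : ∃ i, c i ≠ 0 := Function.ne_iff.mp hc0
  have hxi : x i ≠ 0 := by
    have : i ∈ wordSupp x := heq ▸ hci
    exact this
  set a : F := x i / c i with ha
  have haz : a ≠ 0 := div_ne_zero hxi hci
  set y : Fin n → F := x - a • c with hy
  have hyC : y ∈ C := C.sub_mem hx (C.smul_mem a hcC)
  have hyi : y i = 0 := by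
    simp only [hy, Pi.sub_apply, Pi.smul_apply, smul_eq_mul, ha]
    field_simp
    simp
  have hysub : wordSupp y ⊆ wordSupp c := by
    intro j hj
    simp only [wordSupp, Set.mem_setOf_eq] at hj ⊢
    intro hcj
    apply hj
    simp [hy, hxz j hcj, hcj]
  have hy0 : y = 0 := by
    by_contra hy0
    refine hmin y hyC hy0 ⟨hysub, fun hcy => ?_⟩
    exact (hcy hci) hyi
  refine ⟨a, ?_⟩
  have := sub_eq_zero.mp hy0
  exact this

-- Step 2: existence of a (k-1)-subset of coordinates cutting out span {c}.
lemma minimal_exists_T {F : Type} [Field F] [Fintype F] {n k : ℕ}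
    (C : Submodule F (Fin n → F)) (hk : Module.finrank F C = k)
    {c : Fin n → F} (hc : IsMinimalCodeword C c) :
    ∃ T : Finset (Fin n), T.card = k - 1 ∧
      ∀ x ∈ C, ((∀ i ∈ T, x i = 0) ↔ x ∈ Submodule.span F {c}) := by
  classical
  have hcC := hc.1
  have hc0 := hc.2.1
  set V := ↥C
  set e : Fin n → Module.Dual F V := fun i => (LinearMap.proj i).comp C.subtype with he
  set Z : Set (Fin n) := {i | c i = 0} with hZ
  set s : Set (Module.Dual F V) := e '' Z with hs
  set cC : V := ⟨c, hcC⟩ with hcc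
  have hcC0 : cC ≠ 0 := fun h => hc0 (congrArg Subtype.val h)
  -- the coannihilator of span s is span {cC}
  have hK : (Submodule.span F s).dualCoannihilator = Submodule.span F {cC} := by
    ext x
    have hmem : x ∈ (Submodule.span F s).dualCoannihilator ↔ ∀ f ∈ s, f x = 0 := by
      constructor
      · intro hx f hf
        have : (x : V) ∈ ((Submodule.span F s).dualCoannihilator : Set V) := hx
        rw [Submodule.coe_dualCoannihilator_span] at this
        exact this f hf
      · intro h
        have : (x : V) ∈ ((Submodule.span F s).dualCoannihilator : Set V) := by
          rw [Submodule.coe_dualCoannihilator_span]; exact h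
        exact this
    rw [hmem]
    constructor
    · intro h
      have hvan : ∀ i, c i = 0 → (x : Fin n → F) i = 0 := by
        intro i hi
        exact h (e i) ⟨i, hi, rfl⟩
      obtain ⟨a, hax⟩ := minimal_vanish C hc (x : Fin n → F) x.2 hvan
      rw [Submodule.mem_span_singleton]
      exact ⟨a, Subtype.ext hax.symm⟩
    · intro hx f hf
      rw [Submodule.mem_span_singleton] at hx
      obtain ⟨a, rfl⟩ := hx
      obtain ⟨i, hi, rfl⟩ := hf
      have hci : (cC : Fin n → F) i = 0 := hi
      simp only [he, LinearMap.comp_apply, LinearMap.proj_apply, LinearMap.map_smul]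
      rw [show C.subtype cC i = (cC : Fin n → F) i from rfl, hci, smul_zero]
  have hfin : Module.finrank F (Submodule.span F s) = k - 1 := by
    have h1 := Subspace.finrank_add_finrank_dualCoannihilator_eq (Submodule.span F s)
    rw [hK, finrank_span_singleton hcC0, hk] at h1
    omega
  obtain ⟨t, hts, htspan, htli⟩ := exists_linearIndependent F s
  have htfin : t.Finite := htli.setFinite
  haveI : Fintype t := htfin.fintype
  have htcard : t.toFinset.card = k - 1 := by
    rw [← finrank_span_set_eq_card htli, htspan, hfin]
  -- choose indices
  have hchoice : ∀ f : t, ∃ i : Fin n, i ∈ Z ∧ e i = (f : Module.Dual F V) := by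
    intro f
    obtain ⟨i, hi, hei⟩ := hts f.2
    exact ⟨i, hi, hei⟩
  choose g hgZ hge using hchoice
  have hginj : Function.Injective g := by
    intro f f' hff
    apply Subtype.ext
    rw [← hge f, ← hge f', hff]
  set T : Finset (Fin n) := Finset.univ.image g with hT
  have hTcard : T.card = k - 1 := by
    rw [hT, Finset.card_image_of_injective _ hginj, Finset.card_univ, ← Set.toFinset_card,
      htcard]
  refine ⟨T, hTcard, ?_⟩
  intro x hx
  constructor
  · intro hxT
    have hxK : (⟨x, hx⟩ : V) ∈ (Submodule.span F s).dualCoannihilator := by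
      rw [← htspan]
      have : (⟨x, hx⟩ : V) ∈ ((Submodule.span F t).dualCoannihilator : Set V) := by
        rw [Submodule.coe_dualCoannihilator_span]
        intro f hf
        have : e (g ⟨f, hf⟩) = f := hge ⟨f, hf⟩
        rw [← this]
        exact hxT (g ⟨f, hf⟩) (Finset.mem_image_of_mem g (Finset.mem_univ _))
      exact this
    rw [hK, Submodule.mem_span_singleton] at hxK
    obtain ⟨a, hax⟩ := hxK
    rw [Submodule.mem_span_singleton]
    exact ⟨a, congrArg Subtype.val hax⟩
  · intro hxs i hiT
    rw [Submodule.mem_span_singleton] at hxs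
    obtain ⟨a, rfl⟩ := hxs
    rw [hT, Finset.mem_image] at hiT
    obtain ⟨f, -, rfl⟩ := hiT
    have hci : c (g f) = 0 := hgZ f
    simp [hci]

/-- for every `[n,k]_q` code `C` with `k ≥ 1`, the number of minimal
codewords up to equivalence satisfies `M(C) ≤ C(n, k-1)`. -/
theorem statement_2 {F : Type} [Field F] [Fintype F] {n k : ℕ}
    (C : Submodule F (Fin n → F)) (hk : Module.finrank F C = k) (hk1 : 1 ≤ k) :
    numMinimal C ≤ n.choose (k - 1) := by
  classical
  set pick : Submodule F (Fin n → F) → Finset (Fin n) := fun P =>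
    if h : ∃ T : Finset (Fin n), T.card = k - 1 ∧
        ∀ x ∈ C, ((∀ i ∈ T, x i = 0) ↔ x ∈ P) then h.choose else ∅ with hpick
  have hpickspec : ∀ c : {c : Fin n → F // IsMinimalCodeword C c},
      (pick (Submodule.span F {c.1})).card = k - 1 ∧
      ∀ x ∈ C, ((∀ i ∈ pick (Submodule.span F {c.1}), x i = 0) ↔
        x ∈ Submodule.span F {c.1}) := by
    intro c
    have h := minimal_exists_T C hk c.2
    rw [hpick]
    simp only [dif_pos h]
    exact h.choose_spec
  set f : {c : Fin n → F // IsMinimalCodeword C c} → {T : Finset (Fin n) // T.card = k - 1} :=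
    fun c => ⟨pick (Submodule.span F {c.1}), (hpickspec c).1⟩ with hf
  have hresp : ∀ c c' : {c : Fin n → F // IsMinimalCodeword C c},
      (∃ a : Fˣ, a • c.1 = c'.1) → f c = f c' := by
    rintro c c' ⟨a, ha⟩
    have hsp : Submodule.span F ({c.1} : Set (Fin n → F)) = Submodule.span F {c'.1} := by
      rw [← ha, Units.smul_def]
      exact (Submodule.span_singleton_smul_eq a.isUnit _).symm
    simp only [hf, hsp]
  have hinj : Function.Injective (Quot.lift f hresp) := by
    intro q q'
    induction q using Quot.ind with | _ c => ?_
    induction q' using Quot.ind with | _ c' => ?_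
    intro hqq
    apply Quot.sound
    have hfe : f c = f c' := hqq
    have hTe : pick (Submodule.span F {c.1}) = pick (Submodule.span F {c'.1}) :=
      congrArg Subtype.val hfe
    have h1 := (hpickspec c).2 c'.1 c'.2.1
    have h2 := (hpickspec c').2 c'.1 c'.2.1
    have hc' : c'.1 ∈ Submodule.span F {c.1} :=
      h1.mp (by rw [hTe]; exact h2.mpr (Submodule.mem_span_singleton_self _))
    rw [Submodule.mem_span_singleton] at hc'
    obtain ⟨a, ha⟩ := hc'
    have ha0 : a ≠ 0 := by
      rintro rfl
      exact c'.2.2.1 (by simp [← ha])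
    exact ⟨Units.mk0 a ha0, by simpa [Units.smul_def] using ha⟩
  calc numMinimal C ≤ Nat.card {T : Finset (Fin n) // T.card = k - 1} :=
        Nat.card_le_card_of_injective _ hinj
    _ = n.choose (k - 1) := by
        rw [Nat.card_eq_fintype_card, Fintype.card_finset_len, Fintype.card_fin]
end

section
/- Let C be a projective [n,k]_q linear code with n ≥ k ≥ 2. Then M(C) = C(n, k−1) if and only if C is an MDS code, i.e., its minimum Hamming weight equals n − k + 1. -/
open scoped Classical
open Matrix

section MinimalCodewordAux

variable {F : Type} [Field F] {n : ℕ}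

/-- The subcode of codewords vanishing on `S`. -/
noncomputable def Kz (C : Submodule F (Fin n → F)) (S : Finset (Fin n)) :
    Submodule F (Fin n → F) :=
  C ⊓ ⨅ i ∈ S, LinearMap.ker (LinearMap.proj (R := F) (φ := fun _ : Fin n => F) i)

lemma mem_Kz {C : Submodule F (Fin n → F)} {S : Finset (Fin n)} {c : Fin n → F} :
    c ∈ Kz C S ↔ c ∈ C ∧ ∀ i ∈ S, c i = 0 := by
  simp [Kz]

lemma Kz_le_C {C : Submodule F (Fin n → F)} {S : Finset (Fin n)} : Kz C S ≤ C :=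
  fun _ hc => (mem_Kz.1 hc).1

lemma Kz_mono {C : Submodule F (Fin n → F)} {S T : Finset (Fin n)} (h : S ⊆ T) :
    Kz C T ≤ Kz C S := fun c hc =>
  mem_Kz.2 ⟨(mem_Kz.1 hc).1, fun i hi => (mem_Kz.1 hc).2 i (h hi)⟩

lemma Kz_empty (C : Submodule F (Fin n → F)) : Kz C (∅ : Finset (Fin n)) = C := by
  ext c; simp [mem_Kz]

lemma finrank_Kz_insert_succ (C : Submodule F (Fin n → F)) (S : Finset (Fin n)) (j : Fin n) :
    Module.finrank F (Kz C S) ≤ Module.finrank F (Kz C (insert j S)) + 1 := by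
  classical
  set W := Kz C S with hW
  set g : (Fin n → F) →ₗ[F] F := LinearMap.proj (R := F) (φ := fun _ : Fin n => F) j with hg
  have hins : Kz C (insert j S) = W ⊓ LinearMap.ker g := by
    ext c
    simp only [mem_Kz, Submodule.mem_inf, LinearMap.mem_ker, hW, hg, LinearMap.proj_apply]
    constructor
    · rintro ⟨h1, h2⟩
      exact ⟨⟨h1, fun i hi => h2 i (Finset.mem_insert_of_mem hi)⟩,
        h2 j (Finset.mem_insert_self _ _)⟩
    · rintro ⟨⟨h1, h2⟩, h3⟩
      refine ⟨h1, fun i hi => ?_⟩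
      rcases Finset.mem_insert.1 hi with rfl | hi
      · exact h3
      · exact h2 i hi
  have hrank := LinearMap.finrank_range_add_finrank_ker (g.domRestrict W)
  have h1 : Module.finrank F (LinearMap.range (g.domRestrict W)) ≤ 1 := by
    simpa using (LinearMap.range (g.domRestrict W)).finrank_le
  have h2 : Module.finrank F (LinearMap.ker (g.domRestrict W))
      = Module.finrank F (Kz C (insert j S)) := by
    rw [hins, LinearMap.ker_domRestrict]
    have hcomap : Submodule.comap W.subtype (LinearMap.ker g)
        = Submodule.comap W.subtype (W ⊓ LinearMap.ker g) := by
      ext x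
      simp [Submodule.mem_comap, x.2]
    rw [hcomap]
    exact (Submodule.comapSubtypeEquivOfLe inf_le_left).finrank_eq
  omega

lemma finrank_le_Kz_add_card (C : Submodule F (Fin n → F)) (S : Finset (Fin n)) :
    Module.finrank F C ≤ Module.finrank F (Kz C S) + S.card := by
  classical
  induction S using Finset.induction_on with
  | empty => rw [Kz_empty C]; simp
  | @insert a s ha ih =>
    have h1 := finrank_Kz_insert_succ C s a
    have h2 := Finset.card_insert_of_notMem ha
    omega

lemma Kz_insert_eq {C : Submodule F (Fin n → F)} {I : Finset (Fin n)} {j : Fin n}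
    (h : ∀ c ∈ Kz C I, c j = 0) : Kz C (insert j I) = Kz C I := by
  refine le_antisymm (Kz_mono (Finset.subset_insert _ _)) (fun c hc => ?_)
  refine mem_Kz.2 ⟨(mem_Kz.1 hc).1, fun i hi => ?_⟩
  rcases Finset.mem_insert.1 hi with rfl | hi
  · exact h c hc
  · exact (mem_Kz.1 hc).2 i hi

lemma exists_span_subset (C : Submodule F (Fin n → F)) (S : Finset (Fin n)) :
    ∃ I ⊆ S, Kz C I = Kz C S ∧ Module.finrank F (Kz C I) + I.card = Module.finrank F C := by
  classical
  set 𝒮 := S.powerset.filter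
    (fun I => Module.finrank F (Kz C I) + I.card = Module.finrank F C) with h𝒮
  have hne : 𝒮.Nonempty := by
    refine ⟨∅, ?_⟩
    simp only [h𝒮, Finset.mem_filter, Finset.mem_powerset]
    refine ⟨Finset.empty_subset _, ?_⟩
    rw [Kz_empty C]; simp
  obtain ⟨I, hI, hImax⟩ := Finset.exists_max_image 𝒮 Finset.card hne
  rw [h𝒮, Finset.mem_filter, Finset.mem_powerset] at hI
  refine ⟨I, hI.1, ?_, hI.2⟩
  by_contra hne2
  have hex : ∃ j ∈ S, ∃ c ∈ Kz C I, c j ≠ 0 := by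
    by_contra h
    push_neg at h
    apply hne2
    refine le_antisymm (fun c hc => ?_) (Kz_mono hI.1)
    exact mem_Kz.2 ⟨(mem_Kz.1 hc).1, fun i hi => h i hi c hc⟩
  obtain ⟨j, hjS, c, hc, hcj⟩ := hex
  have hjI : j ∉ I := fun h => hcj ((mem_Kz.1 hc).2 j h)
  have hlt : Kz C (insert j I) < Kz C I := by
    refine lt_of_le_of_ne (Kz_mono (Finset.subset_insert _ _)) (fun h => hcj ?_)
    rw [← h] at hc
    exact (mem_Kz.1 hc).2 j (Finset.mem_insert_self _ _)
  have hfr : Module.finrank F (Kz C (insert j I)) < Module.finrank F (Kz C I) :=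
    Submodule.finrank_lt_finrank_of_lt hlt
  have hge := finrank_Kz_insert_succ C I j
  have hmem : insert j I ∈ 𝒮 := by
    rw [h𝒮, Finset.mem_filter, Finset.mem_powerset]
    refine ⟨Finset.insert_subset hjS hI.1, ?_⟩
    rw [Finset.card_insert_of_notMem hjI]
    omega
  have := hImax _ hmem
  rw [Finset.card_insert_of_notMem hjI] at this
  omega

/-- zero set of a word, as a finset -/
noncomputable def zf (c : Fin n → F) : Finset (Fin n) :=
  Finset.univ.filter (fun i => c i = 0)

lemma mem_zf {c : Fin n → F} {i : Fin n} : i ∈ zf c ↔ c i = 0 := by simp [zf]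

lemma self_mem_Kz_zf {C : Submodule F (Fin n → F)} {c : Fin n → F} (hc : c ∈ C) :
    c ∈ Kz C (zf c) := mem_Kz.2 ⟨hc, fun i hi => mem_zf.1 hi⟩

lemma zf_card_le (c : Fin n → F) : (zf c).card ≤ n := by
  simpa using Finset.card_le_card (Finset.subset_univ (zf c))

lemma ncard_wordSupp (c : Fin n → F) : (wordSupp c).ncard = n - (zf c).card := by
  have h : wordSupp c = ↑((zf c)ᶜ) := by
    ext i; simp [wordSupp, mem_zf]
  rw [h, Set.ncard_coe_finset, Finset.card_compl, Fintype.card_fin]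

lemma supp_subset_iff_zf {c c' : Fin n → F} :
    wordSupp c' ⊆ wordSupp c → zf c ⊆ zf c' := by
  intro h i hi
  rw [mem_zf] at hi ⊢
  by_contra h'
  exact (h (show i ∈ wordSupp c' from h')) hi

/-- A flat: the zero set of a one-dimensional vanishing subcode, maximal. -/
def IsFlat (C : Submodule F (Fin n → F)) (T : Finset (Fin n)) : Prop :=
  Module.finrank F (Kz C T) = 1 ∧ ∀ j ∉ T, Kz C (insert j T) = ⊥

lemma exists_ne_zero_of_finrank_pos {W : Submodule F (Fin n → F)}
    (h : 0 < Module.finrank F W) : ∃ c ∈ W, c ≠ 0 := by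
  refine Submodule.exists_mem_ne_zero_of_ne_bot (fun hbot => ?_)
  rw [hbot] at h
  simp at h

lemma Kz_zf_eq_span {C : Submodule F (Fin n → F)} {c : Fin n → F}
    (hmin : IsMinimalCodeword C c) : Kz C (zf c) = Submodule.span F {c} := by
  obtain ⟨hcC, hc0, hminimal⟩ := hmin
  refine le_antisymm (fun c' hc' => ?_) ?_
  · rcases eq_or_ne c' 0 with rfl | hc'0
    · exact Submodule.zero_mem _
    have hsub : wordSupp c' ⊆ wordSupp c := by
      intro i hi
      simp only [wordSupp, Set.mem_setOf_eq] at hi ⊢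
      intro h
      exact hi ((mem_Kz.1 hc').2 i (mem_zf.2 h))
    have heq : wordSupp c' = wordSupp c := by
      by_contra hne
      exact hminimal c' (Kz_le_C hc') hc'0 (hsub.ssubset_of_ne hne)
    obtain ⟨i, hi⟩ : ∃ i, c i ≠ 0 := by
      by_contra h
      push_neg at h
      exact hc0 (funext h)
    set a := c' i / c i with ha
    have key : c' - a • c = 0 := by
      by_contra hne
      have hmem : c' - a • c ∈ C := sub_mem (Kz_le_C hc') (Submodule.smul_mem _ _ hcC)
      have h1 : wordSupp (c' - a • c) ⊂ wordSupp c := by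
        constructor
        · intro l hl
          simp only [wordSupp, Set.mem_setOf_eq, Pi.sub_apply, Pi.smul_apply,
            smul_eq_mul] at hl ⊢
          intro hcl
          apply hl
          rw [hcl, mul_zero, sub_zero]
          exact (mem_Kz.1 hc').2 l (mem_zf.2 hcl)
        · intro hcc
          have h2 : (c' - a • c) i = 0 := by
            simp only [Pi.sub_apply, Pi.smul_apply, smul_eq_mul, ha]
            field_simp; ring
          have h3 : i ∈ wordSupp (c' - a • c) := hcc hi
          exact h3 h2
      exact hminimal _ hmem hne h1
    have hc'eq : c' = a • c := by rwa [sub_eq_zero] at key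
    rw [hc'eq]
    exact Submodule.smul_mem _ _ (Submodule.mem_span_singleton_self c)
  · rw [Submodule.span_singleton_le_iff_mem]
    exact self_mem_Kz_zf hcC

lemma isFlat_zf {C : Submodule F (Fin n → F)} {c : Fin n → F}
    (hmin : IsMinimalCodeword C c) : IsFlat C (zf c) := by
  have hspan := Kz_zf_eq_span hmin
  refine ⟨by rw [hspan]; exact finrank_span_singleton hmin.2.1, fun j hj => ?_⟩
  rw [eq_bot_iff]
  intro x hx
  have hx' : x ∈ Kz C (zf c) := Kz_mono (Finset.subset_insert _ _) hx
  rw [hspan, Submodule.mem_span_singleton] at hx'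
  obtain ⟨a, rfl⟩ := hx'
  have h1 : (a • c) j = 0 := (mem_Kz.1 hx).2 j (Finset.mem_insert_self _ _)
  have hcj : c j ≠ 0 := fun h => hj (mem_zf.2 h)
  have ha : a = 0 := by
    simp only [Pi.smul_apply, smul_eq_mul] at h1
    rcases mul_eq_zero.1 h1 with h | h
    · exact h
    · exact absurd h hcj
  simp [ha]

lemma flat_gen {C : Submodule F (Fin n → F)} {T : Finset (Fin n)} (hT : IsFlat C T)
    {c : Fin n → F} (hc : c ∈ Kz C T) (hc0 : c ≠ 0) :
    Kz C T = Submodule.span F {c} ∧ zf c = T ∧ IsMinimalCodeword C c := by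
  have hle : Submodule.span F {c} ≤ Kz C T := (Submodule.span_singleton_le_iff_mem _ _).2 hc
  have heq : Submodule.span F {c} = Kz C T :=
    Submodule.eq_of_le_of_finrank_le hle (by rw [hT.1, finrank_span_singleton hc0])
  have hzf : zf c = T := by
    apply Finset.Subset.antisymm
    · intro j hj
      by_contra hjT
      have hcj : c ∈ Kz C (insert j T) := by
        refine mem_Kz.2 ⟨(mem_Kz.1 hc).1, fun i hi => ?_⟩
        rcases Finset.mem_insert.1 hi with rfl | hi
        · exact mem_zf.1 hj
        · exact (mem_Kz.1 hc).2 i hi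
      rw [hT.2 j hjT] at hcj
      exact hc0 (Submodule.mem_bot F |>.1 hcj)
    · intro i hi
      exact mem_zf.2 ((mem_Kz.1 hc).2 i hi)
  refine ⟨heq.symm, hzf, Kz_le_C hc, hc0, fun c' hc'C hc'0 hss => ?_⟩
  have hzsub : zf c ⊆ zf c' := supp_subset_iff_zf hss.subset
  have hc'K : c' ∈ Kz C T := by
    rw [← hzf]
    exact Kz_mono hzsub (self_mem_Kz_zf hc'C)
  rw [← heq, Submodule.mem_span_singleton] at hc'K
  obtain ⟨a, rfl⟩ := hc'K
  have ha : a ≠ 0 := fun h => hc'0 (by simp [h])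
  refine hss.ne ?_
  ext i
  simp [wordSupp, ha]

lemma zf_unit_smul (a : Fˣ) (c : Fin n → F) : zf ((a : Fˣ) • c) = zf c := by
  ext i
  rw [mem_zf, mem_zf]
  simp only [Pi.smul_apply, Units.smul_def, smul_eq_mul]
  constructor
  · intro h
    rcases mul_eq_zero.1 h with h | h
    · exact absurd h a.ne_zero
    · exact h
  · intro h; rw [h, mul_zero]

lemma numMinimal_eq_card_flats (C : Submodule F (Fin n → F)) :
    numMinimal C = Nat.card {T : Finset (Fin n) // IsFlat C T} := by
  classical
  let r := fun c c' : {c : Fin n → F // IsMinimalCodeword C c} => ∃ a : Fˣ, a • c.1 = c'.1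
  have hresp : ∀ c c' : {c : Fin n → F // IsMinimalCodeword C c}, r c c' →
      (fun c : {c : Fin n → F // IsMinimalCodeword C c} =>
        (⟨zf c.1, isFlat_zf c.2⟩ : {T : Finset (Fin n) // IsFlat C T})) c
      = (fun c : {c : Fin n → F // IsMinimalCodeword C c} =>
        (⟨zf c.1, isFlat_zf c.2⟩ : {T : Finset (Fin n) // IsFlat C T})) c' := by
    rintro c c' ⟨a, ha⟩
    apply Subtype.ext
    show zf c.1 = zf c'.1
    rw [← ha, zf_unit_smul]
  let g : Quot r → {T : Finset (Fin n) // IsFlat C T} := Quot.lift _ hresp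
  have hg : ∀ c, g (Quot.mk r c) = ⟨zf c.1, isFlat_zf c.2⟩ := fun _ => rfl
  have hbij : Function.Bijective g := by
    constructor
    · intro x y
      induction x using Quot.ind with | _ c =>
      induction y using Quot.ind with | _ c' =>
      intro h
      rw [hg, hg] at h
      have hz : zf c.1 = zf c'.1 := congrArg Subtype.val h
      apply Quot.sound
      have h1 : c'.1 ∈ Submodule.span F {c.1} := by
        rw [← Kz_zf_eq_span c.2, hz]
        exact self_mem_Kz_zf c'.2.1
      rw [Submodule.mem_span_singleton] at h1
      obtain ⟨a, ha⟩ := h1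
      have ha0 : a ≠ 0 := fun h0 => c'.2.2.1 (by rw [← ha, h0, zero_smul])
      exact ⟨Units.mk0 a ha0, by simpa [Units.smul_def] using ha⟩
    · rintro ⟨T, hT⟩
      have hpos : 0 < Module.finrank F (Kz C T) := by rw [hT.1]; norm_num
      obtain ⟨c, hcK, hc0⟩ := exists_ne_zero_of_finrank_pos hpos
      obtain ⟨hspan, hzf, hmin⟩ := flat_gen hT hcK hc0
      refine ⟨Quot.mk _ ⟨c, hmin⟩, ?_⟩
      rw [hg]
      exact Subtype.ext hzf
  exact Nat.card_eq_of_bijective g hbij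

lemma flat_eq_filter {C : Submodule F (Fin n → F)} {T : Finset (Fin n)} (hT : IsFlat C T) :
    T = Finset.univ.filter (fun j => ∀ c ∈ Kz C T, c j = 0) := by
  ext j
  simp only [Finset.mem_filter, Finset.mem_univ, true_and]
  constructor
  · intro hj c hc
    exact (mem_Kz.1 hc).2 j hj
  · intro h
    by_contra hj
    have heq : Kz C (insert j T) = Kz C T := Kz_insert_eq h
    have hbot := hT.2 j hj
    rw [hbot] at heq
    have h1 := hT.1
    rw [← heq] at h1
    simp at h1


lemma exists_low_weight (C : Submodule F (Fin n → F)) {k : ℕ}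
    (hk : Module.finrank F C = k) (hk1 : 1 ≤ k) (hkn : k ≤ n) :
    ∃ c ∈ C, c ≠ 0 ∧ (wordSupp c).ncard ≤ n - k + 1 := by
  obtain ⟨T, hTsub, hTcard⟩ := Finset.exists_subset_card_eq (s := (Finset.univ : Finset (Fin n)))
    (n := k - 1) (by simp; omega)
  have h1 : 0 < Module.finrank F (Kz C T) := by
    have := finrank_le_Kz_add_card C T
    omega
  obtain ⟨c, hcK, hc0⟩ := exists_ne_zero_of_finrank_pos h1
  refine ⟨c, Kz_le_C hcK, hc0, ?_⟩
  have hsub : T ⊆ zf c := fun i hi => mem_zf.2 ((mem_Kz.1 hcK).2 i hi)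
  have h2 := Finset.card_le_card hsub
  have h3 := ncard_wordSupp c
  have h4 := zf_card_le c
  omega

lemma minDist_le_singleton_bound (C : Submodule F (Fin n → F)) {k : ℕ}
    (hk : Module.finrank F C = k) (hk1 : 1 ≤ k) (hkn : k ≤ n) :
    minDist C ≤ n - k + 1 := by
  obtain ⟨c, hcC, hc0, hw⟩ := exists_low_weight C hk hk1 hkn
  exact le_trans (Nat.sInf_le ⟨c, hcC, hc0, rfl⟩) hw

lemma flat_iff_of_MDS (C : Submodule F (Fin n → F)) {k : ℕ}
    (hk : Module.finrank F C = k) (hd : minDist C = n - k + 1)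
    (hk2 : 2 ≤ k) (hkn : k ≤ n) (T : Finset (Fin n)) :
    IsFlat C T ↔ T.card = k - 1 := by
  -- basic: every nonzero codeword c has (zf c).card ≤ k - 1
  have hzf_bound : ∀ c ∈ C, c ≠ 0 → (zf c).card ≤ k - 1 := by
    intro c hc hc0
    have h1 : minDist C ≤ (wordSupp c).ncard := Nat.sInf_le ⟨c, hc, hc0, rfl⟩
    rw [hd] at h1
    have h2 := ncard_wordSupp c
    have h3 := zf_card_le c
    omega
  constructor
  · rintro ⟨hfr, hflat⟩
    obtain ⟨c, hcK, hc0⟩ := exists_ne_zero_of_finrank_pos (by rw [hfr]; norm_num)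
    have hsub : T ⊆ zf c := fun i hi => mem_zf.2 ((mem_Kz.1 hcK).2 i hi)
    have h1 := Finset.card_le_card hsub
    have h2 := hzf_bound c (Kz_le_C hcK) hc0
    have h3 := finrank_le_Kz_add_card C T
    omega
  · intro hTcard
    have hpos : 0 < Module.finrank F (Kz C T) := by
      have := finrank_le_Kz_add_card C T
      omega
    obtain ⟨c, hcK, hc0⟩ := exists_ne_zero_of_finrank_pos hpos
    have hcC : c ∈ C := Kz_le_C hcK
    have hsub : T ⊆ zf c := fun i hi => mem_zf.2 ((mem_Kz.1 hcK).2 i hi)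
    have hzfT : zf c = T := by
      refine (Finset.eq_of_subset_of_card_le hsub ?_).symm
      have := hzf_bound c hcC hc0
      omega
    obtain ⟨i, hi⟩ : ∃ i, c i ≠ 0 := by
      by_contra h
      push_neg at h
      exact hc0 (funext h)
    have hiT : i ∉ T := fun h => hi (mem_zf.1 (hzfT ▸ h))
    have hspanle : Kz C T ≤ Submodule.span F {c} := by
      intro c' hc'
      rcases eq_or_ne c' 0 with rfl | hc'0
      · exact Submodule.zero_mem _
      have hc'C : c' ∈ C := Kz_le_C hc'
      set a := c' i / c i with ha
      have key : c' - a • c = 0 := by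
        by_contra hne
        have hmem : c' - a • c ∈ C := sub_mem hc'C (Submodule.smul_mem _ _ hcC)
        have hsub2 : insert i T ⊆ zf (c' - a • c) := by
          intro l hl
          rw [mem_zf]
          simp only [Pi.sub_apply, Pi.smul_apply, smul_eq_mul]
          rcases Finset.mem_insert.1 hl with rfl | hl
          · rw [ha]; field_simp; ring
          · rw [(mem_Kz.1 hc').2 l hl, (mem_Kz.1 hcK).2 l hl, mul_zero, sub_zero]
        have h5 := Finset.card_le_card hsub2
        rw [Finset.card_insert_of_notMem hiT, hTcard] at h5
        have h6 := hzf_bound _ hmem hne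
        omega
      have hc'eq : c' = a • c := by rwa [sub_eq_zero] at key
      rw [hc'eq]
      exact Submodule.smul_mem _ _ (Submodule.mem_span_singleton_self c)
    constructor
    · refine le_antisymm ?_ hpos
      calc Module.finrank F (Kz C T) ≤ Module.finrank F (Submodule.span F {c}) :=
            Submodule.finrank_mono hspanle
        _ = 1 := finrank_span_singleton hc0
    · intro j hj
      rw [eq_bot_iff]
      intro x hx
      rw [Submodule.mem_bot]
      by_contra hx0
      have hxC : x ∈ C := Kz_le_C hx
      have hsub2 : insert j T ⊆ zf x := fun l hl => mem_zf.2 ((mem_Kz.1 hx).2 l hl)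
      have h5 := Finset.card_le_card hsub2
      rw [Finset.card_insert_of_notMem hj, hTcard] at h5
      have h6 := hzf_bound x hxC hx0
      omega

lemma count_eq_of_MDS (C : Submodule F (Fin n → F)) {k : ℕ}
    (hk : Module.finrank F C = k) (hd : minDist C = n - k + 1)
    (hk2 : 2 ≤ k) (hkn : k ≤ n) :
    numMinimal C = n.choose (k - 1) := by
  rw [numMinimal_eq_card_flats C,
    Nat.card_congr (Equiv.subtypeEquivRight (flat_iff_of_MDS C hk hd hk2 hkn)),
    Nat.card_eq_fintype_card]
  classical
  have hcfl := Fintype.card_finset_len (α := Fin n) (k - 1)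
  rw [Fintype.card_fin] at hcfl
  rw [← hcfl]

lemma count_lt_of_not_MDS (C : Submodule F (Fin n → F)) {k : ℕ}
    (hk : Module.finrank F C = k) (hd : minDist C ≠ n - k + 1)
    (hk2 : 2 ≤ k) (hkn : k ≤ n) :
    numMinimal C < n.choose (k - 1) := by
  classical
  -- a minimum-weight codeword exists and has weight ≤ n - k
  have hne : {w | ∃ c ∈ C, c ≠ 0 ∧ (wordSupp c).ncard = w}.Nonempty := by
    obtain ⟨c, hcC, hc0, _⟩ := exists_low_weight C hk (by omega) hkn
    exact ⟨_, c, hcC, hc0, rfl⟩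
  obtain ⟨c0, hc0C, hc00, hc0w⟩ := Nat.sInf_mem hne
  have hble := minDist_le_singleton_bound C hk (by omega) hkn
  have hlow : (wordSupp c0).ncard ≤ n - k := by
    have : (wordSupp c0).ncard = minDist C := hc0w
    omega
  have hzc0 : k ≤ (zf c0).card := by
    have h1 := ncard_wordSupp c0
    have h2 := zf_card_le c0
    omega
  -- two distinct (k-1)-subsets of zf c0
  obtain ⟨J, hJsub, hJcard⟩ := Finset.exists_subset_card_eq (s := zf c0) (n := k) hzc0
  obtain ⟨x, hxJ⟩ : J.Nonempty := Finset.card_pos.1 (by omega)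
  obtain ⟨y, hyJ, hyx⟩ : ∃ y ∈ J, y ≠ x := Finset.exists_mem_ne (by omega) x
  set I1 := J.erase x with hI1
  set I2 := J.erase y with hI2
  have hI1card : I1.card = k - 1 := by rw [hI1, Finset.card_erase_of_mem hxJ, hJcard]
  have hI2card : I2.card = k - 1 := by rw [hI2, Finset.card_erase_of_mem hyJ, hJcard]
  have hI1I2 : I1 ≠ I2 := by
    intro h
    have hx2 : x ∈ I2 := Finset.mem_erase.2 ⟨hyx.symm, hxJ⟩
    rw [← h] at hx2
    exact Finset.notMem_erase x J hx2
  -- the injection from flats to (k-1)-subsets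
  have hchoice : ∀ T : {T : Finset (Fin n) // IsFlat C T},
      ∃ I : Finset (Fin n), Kz C I = Kz C T.1 ∧ I.card = k - 1 := by
    rintro ⟨T, hT⟩
    obtain ⟨I, hIT, hIK, hIr⟩ := exists_span_subset C T
    refine ⟨I, hIK, ?_⟩
    rw [hIK, hT.1, hk] at hIr
    omega
  choose β hβK hβcard using hchoice
  set β' : {T : Finset (Fin n) // IsFlat C T} → {I : Finset (Fin n) // I.card = k - 1} :=
    fun T => ⟨β T, hβcard T⟩ with hβ'
  have hinj : Function.Injective β' := by
    intro T1 T2 h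
    have hbeq : β T1 = β T2 := congrArg Subtype.val h
    have hK : Kz C T1.1 = Kz C T2.1 := by rw [← hβK T1, ← hβK T2, hbeq]
    apply Subtype.ext
    rw [flat_eq_filter T1.2, flat_eq_filter T2.2, hK]
  have hkey : ¬ ((⟨I1, hI1card⟩ : {I : Finset (Fin n) // I.card = k - 1}) ∈ Set.range β'
      ∧ (⟨I2, hI2card⟩ : {I : Finset (Fin n) // I.card = k - 1}) ∈ Set.range β') := by
    rintro ⟨⟨T1, hT1⟩, ⟨T2, hT2⟩⟩
    have hb1 : β T1 = I1 := congrArg Subtype.val hT1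
    have hb2 : β T2 = I2 := congrArg Subtype.val hT2
    have hc0mem : ∀ (I : Finset (Fin n)), I ⊆ zf c0 → c0 ∈ Kz C I := by
      intro I hI
      exact mem_Kz.2 ⟨hc0C, fun i hi => mem_zf.1 (hI hi)⟩
    have hsp1 : Kz C T1.1 = Submodule.span F {c0} := by
      have hmem : c0 ∈ Kz C T1.1 := by
        rw [← hβK T1, hb1]
        exact hc0mem I1 (fun i hi => hJsub (Finset.erase_subset _ _ hi))
      refine (Submodule.eq_of_le_of_finrank_le
        ((Submodule.span_singleton_le_iff_mem _ _).2 hmem) ?_).symm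
      rw [T1.2.1, finrank_span_singleton hc00]
    have hsp2 : Kz C T2.1 = Submodule.span F {c0} := by
      have hmem : c0 ∈ Kz C T2.1 := by
        rw [← hβK T2, hb2]
        exact hc0mem I2 (fun i hi => hJsub (Finset.erase_subset _ _ hi))
      refine (Submodule.eq_of_le_of_finrank_le
        ((Submodule.span_singleton_le_iff_mem _ _).2 hmem) ?_).symm
      rw [T2.2.1, finrank_span_singleton hc00]
    have hT12 : T1 = T2 := by
      apply Subtype.ext
      rw [flat_eq_filter T1.2, flat_eq_filter T2.2, hsp1, hsp2]
    rw [hT12, hb2] at hb1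
    exact hI1I2 hb1.symm
  have hcard_lt : Fintype.card {T : Finset (Fin n) // IsFlat C T}
      < Fintype.card {I : Finset (Fin n) // I.card = k - 1} := by
    rcases not_and_or.1 hkey with h | h
    · exact Fintype.card_lt_of_injective_of_notMem β' hinj h
    · exact Fintype.card_lt_of_injective_of_notMem β' hinj h
  rw [numMinimal_eq_card_flats C, Nat.card_eq_fintype_card]
  calc Fintype.card {T : Finset (Fin n) // IsFlat C T}
      < Fintype.card {I : Finset (Fin n) // I.card = k - 1} := hcard_lt
    _ = n.choose (k - 1) := by
      have hcfl := Fintype.card_finset_len (α := Fin n) (k - 1)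
      rw [Fintype.card_fin] at hcfl
      rw [← hcfl]


end MinimalCodewordAux

/-- a projective `[n,k]_q` code `C` with `n ≥ k ≥ 2` satisfies
`M(C) = C(n, k-1)` iff `C` is MDS, i.e. its minimum Hamming weight equals `n - k + 1`. -/
theorem statement_3 {F : Type} [Field F] [Fintype F] {n k : ℕ}
    (C : Submodule F (Fin n → F)) (hk : Module.finrank F C = k)
    (hproj : IsProjective C) (hk2 : 2 ≤ k) (hkn : k ≤ n) :
    numMinimal C = n.choose (k - 1) ↔ minDist C = n - k + 1 := by
  constructor
  · intro hnum
    by_contra hne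
    exact absurd hnum (Nat.ne_of_lt (count_lt_of_not_MDS C hk hne hk2 hkn))
  · intro hd
    exact count_eq_of_MDS C hk hd hk2 hkn
end

section
/- Let C be a projective [n,k]_q linear code with k ≥ 2 and let r be an integer with 1 ≤ r ≤ (q^k−1)/(q−1). If n > (q^k−1)/(q−1) − α_q(k,r), then M(C) > (q^k−1)/(q−1) − r. -/
open scoped Classical
open Matrix

set_option maxHeartbeats 1000000

section AuxMC

variable {F : Type} [Field F] {k : ℕ}

noncomputable def dpL (x : Fin k → F) : (Fin k → F) →ₗ[F] F where
  toFun y := ∑ j, x j * y j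
  map_add' y z := by simp [mul_add, Finset.sum_add_distrib]
  map_smul' a y := by simp [Finset.mul_sum, mul_left_comm]

lemma dpL_apply (x y : Fin k → F) : dpL x y = ∑ j, x j * y j := rfl

lemma dpL_eq_zero {x : Fin k → F} (h : dpL x = 0) : x = 0 := by
  funext j
  have := DFunLike.congr_fun h (Pi.single j 1)
  simpa [dpL_apply, Pi.single_apply, eq_comm] using this

lemma dpL_sub_smul (x x' : Fin k → F) (a : F) (v : Fin k → F) :
    dpL (x' - a • x) v = dpL x' v - a * dpL x v := by
  simp [dpL_apply, sub_mul, Finset.sum_sub_distrib, Finset.mul_sum, mul_assoc]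

lemma ker_dpL_prop {x x' : Fin k → F} (hx : x ≠ 0)
    (h : LinearMap.ker (dpL x) ≤ LinearMap.ker (dpL x')) :
    ∃ a : F, x' = a • x := by
  have hdp : dpL x ≠ 0 := fun h0 => hx (dpL_eq_zero h0)
  obtain ⟨z, hz⟩ : ∃ z, dpL x z ≠ 0 := by
    by_contra hc
    push_neg at hc
    exact hdp (LinearMap.ext fun v => by simpa using hc v)
  refine ⟨dpL x' z / dpL x z, ?_⟩
  have key : ∀ v, dpL x' v = (dpL x' z / dpL x z) * dpL x v := by
    intro v
    have hmem : v - (dpL x v / dpL x z) • z ∈ LinearMap.ker (dpL x) := by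
      simp [LinearMap.mem_ker, map_sub, LinearMap.map_smul, smul_eq_mul,
        div_mul_cancel₀ _ hz]
    have h2 := h hmem
    rw [LinearMap.mem_ker, map_sub, LinearMap.map_smul, sub_eq_zero] at h2
    rw [h2, smul_eq_mul]
    field_simp
  have h0 : dpL (x' - (dpL x' z / dpL x z) • x) = 0 := by
    apply LinearMap.ext
    intro v
    rw [dpL_sub_smul]
    rw [key v]
    simp
  have := dpL_eq_zero h0
  rw [sub_eq_zero] at this
  exact this

lemma finrank_ker_dpL {x : Fin k → F} (hx : x ≠ 0) :
    Module.finrank F (LinearMap.ker (dpL x)) = k - 1 := by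
  have hdp : dpL x ≠ 0 := fun h0 => hx (dpL_eq_zero h0)
  obtain ⟨z, hz⟩ : ∃ z, dpL x z ≠ 0 := by
    by_contra hc
    push_neg at hc
    exact hdp (LinearMap.ext fun v => by simpa using hc v)
  have hr : LinearMap.range (dpL x) = ⊤ := by
    rw [eq_top_iff]
    intro a _
    exact ⟨(a / dpL x z) • z, by
      simp [LinearMap.map_smul, smul_eq_mul, div_mul_cancel₀ _ hz]⟩
  have h1 := (dpL x).finrank_range_add_finrank_ker
  rw [hr, Module.finrank_fin_fun] at h1
  have : Module.finrank F (⊤ : Submodule F F) = 1 := by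
    rw [finrank_top, Module.finrank_self]
  omega

lemma finrank_inf_hyperplanes {H H' : Submodule F (Fin k → F)}
    (hH : Module.finrank F H = k - 1) (hH' : Module.finrank F H' = k - 1)
    (hne : H ≠ H') (hk : 2 ≤ k) :
    Module.finrank F (H ⊓ H' : Submodule F (Fin k → F)) = k - 2 := by
  have hlt : H < H ⊔ H' := by
    rcases lt_or_eq_of_le (le_sup_left : H ≤ H ⊔ H') with h | h
    · exact h
    · exfalso
      apply hne
      have h' : H' ≤ H := by rw [h]; exact le_sup_right
      exact (Submodule.eq_of_le_of_finrank_le h' (by omega)).symm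
  have h2 : Module.finrank F H < Module.finrank F (H ⊔ H' : Submodule F (Fin k → F)) :=
    Submodule.finrank_lt_finrank_of_lt hlt
  have h3 : Module.finrank F (H ⊔ H' : Submodule F (Fin k → F)) ≤ k := by
    have := Submodule.finrank_le (H ⊔ H')
    rwa [Module.finrank_fin_fun] at this
  have h4 := Submodule.finrank_sup_add_finrank_inf_eq H H'
  omega

lemma span_eq_of_rank1' {P : Submodule F (Fin k → F)}
    (hP : Module.finrank F P = 1) {v : Fin k → F} (hv : v ∈ P) (h0 : v ≠ 0) :
    Submodule.span F {v} = P :=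
  Submodule.eq_of_le_of_finrank_le
    (Submodule.span_le.2 (Set.singleton_subset_iff.2 hv))
    (by rw [hP, finrank_span_singleton h0])

end AuxMC

section Count

variable {F : Type} [Field F] [Fintype F] {k : ℕ}

lemma finite_submodule_aux : Finite (Submodule F (Fin k → F)) :=
  Finite.of_injective (fun p : Submodule F (Fin k → F) => (p : Set (Fin k → F)))
    SetLike.coe_injective

lemma nat_card_ne_aux (α : Type*) [Finite α] (a : α) :
    Nat.card {x : α // x ≠ a} = Nat.card α - 1 := by
  have h : {x : α | x ≠ a} = Set.univ \ {a} := by ext; simp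
  calc Nat.card {x : α // x ≠ a} = ({x : α | x ≠ a} : Set α).ncard :=
        (Nat.card_coe_set_eq _).symm
    _ = Nat.card α - 1 := by
        rw [h, Set.ncard_diff (Set.subset_univ _), Set.ncard_univ,
          Set.ncard_singleton]

lemma nat_card_rank1_mul :
    Nat.card {P : Submodule F (Fin k → F) // Module.finrank F P = 1}
      * (Fintype.card F - 1) = Fintype.card F ^ k - 1 := by
  haveI : Finite (Submodule F (Fin k → F)) := finite_submodule_aux
  set T := {P : Submodule F (Fin k → F) // Module.finrank F P = 1} with hT
  haveI : Fintype T := Fintype.ofFinite T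
  set σ : {v : Fin k → F // v ≠ 0} → T :=
    fun v => ⟨Submodule.span F {v.1}, finrank_span_singleton v.2⟩ with hσ
  have hV : Nat.card {v : Fin k → F // v ≠ 0} = Fintype.card F ^ k - 1 := by
    rw [nat_card_ne_aux, Nat.card_fun, Nat.card_eq_fintype_card,
      Nat.card_eq_fintype_card, Fintype.card_fin]
  have hfiber : ∀ P : T, Nat.card {v : {v : Fin k → F // v ≠ 0} // σ v = P}
      = Fintype.card F - 1 := by
    intro P
    have e : {v : {v : Fin k → F // v ≠ 0} // σ v = P} ≃ {u : P.1 // u ≠ 0} :=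
      { toFun := fun v => ⟨⟨v.1.1, by
          have h2 : Submodule.span F {v.1.1} = P.1 := congrArg Subtype.val v.2
          rw [← h2]; exact Submodule.mem_span_singleton_self _⟩, by
          intro hc
          apply v.1.2
          exact congrArg Subtype.val hc⟩
        invFun := fun u => ⟨⟨u.1.1, fun hc => u.2 (by
          apply Subtype.ext; exact hc)⟩, by
          apply Subtype.ext
          exact span_eq_of_rank1' P.2 u.1.2 (fun hc => u.2 (Subtype.ext hc))⟩
        left_inv := fun v => by apply Subtype.ext; apply Subtype.ext; rfl
        right_inv := fun u => by apply Subtype.ext; apply Subtype.ext; rfl }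
    rw [Nat.card_congr e, nat_card_ne_aux]
    haveI : Fintype P.1 := Fintype.ofFinite P.1
    rw [Nat.card_eq_fintype_card, Module.card_eq_pow_finrank (K := F) (V := P.1), P.2,
      pow_one]
  have e2 : (Σ P : T, {v : {v : Fin k → F // v ≠ 0} // σ v = P})
      ≃ {v : Fin k → F // v ≠ 0} := Equiv.sigmaFiberEquiv σ
  have h3 : Nat.card {v : Fin k → F // v ≠ 0}
      = Fintype.card T * (Fintype.card F - 1) := by
    rw [← Nat.card_congr e2, Nat.card_eq_fintype_card, Fintype.card_sigma]
    have : ∀ P : T, Fintype.card {v : {v : Fin k → F // v ≠ 0} // σ v = P}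
        = Fintype.card F - 1 := fun P => by
      rw [← Nat.card_eq_fintype_card]; exact hfiber P
    simp only [this]
    rw [Finset.sum_const, Finset.card_univ, smul_eq_mul]
  rw [Nat.card_eq_fintype_card]
  rw [← hV, h3]

lemma nat_card_rank1 :
    Nat.card {P : Submodule F (Fin k → F) // Module.finrank F P = 1}
      = (Fintype.card F ^ k - 1) / (Fintype.card F - 1) := by
  have h := nat_card_rank1_mul (F := F) (k := k)
  have hq : 0 < Fintype.card F - 1 := by
    have := Fintype.one_lt_card (α := F)
    omega
  rw [← h, Nat.mul_div_cancel _ hq]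

end Count

lemma quot_card_eq_range {α β : Type*} (rel : α → α → Prop) (μ : α → β)
    (h1 : ∀ a a', rel a a' → μ a = μ a')
    (h2 : ∀ a a', μ a = μ a' → Quot.mk rel a = Quot.mk rel a') :
    Nat.card (Quot rel) = (Set.range μ).ncard := by
  rw [← Nat.card_coe_set_eq]
  apply Nat.card_eq_of_bijective
    (Quot.lift (fun a => (⟨μ a, Set.mem_range_self a⟩ : Set.range μ))
      (fun a a' h => Subtype.ext (h1 a a' h)))
  constructor
  · intro u u'
    induction u using Quot.ind with
    | _ a =>
    induction u' using Quot.ind with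
    | _ a' =>
    intro h
    exact h2 a a' (congrArg Subtype.val h)
  · rintro ⟨_, a, rfl⟩
    exact ⟨Quot.mk _ a, rfl⟩

/-- if `C` is a projective `[n,k]_q` code, `1 ≤ r ≤ (q^k-1)/(q-1)` and
`n > (q^k-1)/(q-1) - α_q(k,r)`, then `M(C) > (q^k-1)/(q-1) - r`. -/
theorem statement_4 {F : Type} [Field F] [Fintype F] {q n k r : ℕ}
    (hq : Fintype.card F = q)
    (C : Submodule F (Fin n → F)) (hk : Module.finrank F C = k)
    (hproj : IsProjective C) (hk2 : 2 ≤ k)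
    (hr1 : 1 ≤ r) (hr2 : r ≤ (q ^ k - 1) / (q - 1))
    (hn : n > (q ^ k - 1) / (q - 1) - alphaQ F k r) :
    numMinimal C > (q ^ k - 1) / (q - 1) - r := by
  subst hq
  by_contra hcon
  push_neg at hcon
  haveI : Finite (Submodule F (Fin k → F)) := finite_submodule_aux
  set θ := (Fintype.card F ^ k - 1) / (Fintype.card F - 1) with hθ
  -- basis and coordinates
  let B : Module.Basis (Fin k) F C := Module.finBasisOfFinrankEq F C hk
  let φ : (Fin k → F) ≃ₗ[F] C := B.equivFun.symm
  let w : (Fin k → F) → (Fin n → F) := fun x => (φ x : Fin n → F)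
  let g : Fin n → (Fin k → F) := fun i j => ((B j : C) : Fin n → F) i
  have hkey : ∀ (x : Fin k → F) (i : Fin n), w x i = dpL x (g i) := by
    intro x i
    show ((B.equivFun.symm x : C) : Fin n → F) i = _
    rw [Module.Basis.equivFun_symm_apply]
    rw [dpL_apply]
    simp only [AddSubmonoidClass.coe_finset_sum, SetLike.val_smul, Finset.sum_apply,
      Pi.smul_apply, smul_eq_mul]
    rfl
  have hwC : ∀ x, w x ∈ C := fun x => (φ x).2
  have hw0 : ∀ x, w x = 0 → x = 0 := by
    intro x hx
    have : φ x = 0 := Subtype.ext hx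
    exact (LinearEquiv.map_eq_zero_iff φ).1 this
  have hwinv : ∀ (c : Fin n → F) (hc : c ∈ C), w (φ.symm ⟨c, hc⟩) = c := by
    intro c hc
    show ((φ (φ.symm ⟨c, hc⟩) : C) : Fin n → F) = c
    rw [LinearEquiv.apply_symm_apply]
  have hwsmul : ∀ (a : F) (x : Fin k → F), w (a • x) = a • w x := by
    intro a x
    show ((φ (a • x) : C) : Fin n → F) = _
    rw [_root_.map_smul]
    rfl
  -- columns
  have hg0 : ∀ i, g i ≠ 0 := by
    intro i hgi
    obtain ⟨c, hc, hci⟩ := hproj.1 i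
    apply hci
    rw [← hwinv c hc, hkey, hgi, map_zero]
  have colinj : Function.Injective (fun i => Submodule.span F {g i}) := by
    intro i j hij
    by_contra hne
    simp only at hij
    have hmem : g j ∈ Submodule.span F {g i} := by
      rw [hij]; exact Submodule.mem_span_singleton_self _
    obtain ⟨a, ha⟩ := Submodule.mem_span_singleton.1 hmem
    have ha0 : a ≠ 0 := by
      intro h0
      apply hg0 j
      rw [← ha, h0, zero_smul]
    apply hproj.2 i j hne
    refine ⟨a, ha0, ?_⟩
    intro c hc
    rw [← hwinv c hc, hkey, hkey, ← ha, LinearMap.map_smul, smul_eq_mul]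
  -- minimal codewords counted by points
  set MinT := {c : Fin n → F // IsMinimalCodeword C c} with hMinT
  set μ : MinT → Submodule F (Fin k → F) :=
    fun c => Submodule.span F {(φ.symm ⟨c.1, c.2.1⟩ : Fin k → F)} with hμ
  have x_ne : ∀ c : MinT, (φ.symm ⟨c.1, c.2.1⟩ : Fin k → F) ≠ 0 := by
    intro c h0
    apply c.2.2.1
    have : (⟨c.1, c.2.1⟩ : C) = 0 := by
      rw [← LinearEquiv.apply_symm_apply φ ⟨c.1, c.2.1⟩, h0, map_zero]
    exact congrArg Subtype.val this
  have hrel : ∀ c c' : MinT, (∃ a : Fˣ, a • c.1 = c'.1) → μ c = μ c' := by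
    rintro c c' ⟨a, ha⟩
    have hx' : (φ.symm ⟨c'.1, c'.2.1⟩ : Fin k → F)
        = (a : F) • (φ.symm ⟨c.1, c.2.1⟩ : Fin k → F) := by
      rw [← _root_.map_smul]
      congr 1
      apply Subtype.ext
      show c'.1 = (a : F) • c.1
      rw [← ha, Units.smul_def]
    show Submodule.span F {(φ.symm ⟨c.1, c.2.1⟩ : Fin k → F)}
        = Submodule.span F {(φ.symm ⟨c'.1, c'.2.1⟩ : Fin k → F)}
    rw [hx']
    exact (Submodule.span_singleton_smul_eq (Units.isUnit a) _).symm
  have h2 : ∀ c c' : MinT, μ c = μ c' →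
      Quot.mk (fun c c' : MinT => ∃ a : Fˣ, a • c.1 = c'.1) c
        = Quot.mk (fun c c' : MinT => ∃ a : Fˣ, a • c.1 = c'.1) c' := by
    intro c c' hμeq
    have hmem : (φ.symm ⟨c'.1, c'.2.1⟩ : Fin k → F)
        ∈ Submodule.span F {(φ.symm ⟨c.1, c.2.1⟩ : Fin k → F)} := by
      have h := hμeq
      simp only [hμ] at h
      rw [h]; exact Submodule.mem_span_singleton_self _
    obtain ⟨a, ha⟩ := Submodule.mem_span_singleton.1 hmem
    have ha0 : a ≠ 0 := by
      intro h0
      apply x_ne c'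
      rw [← ha, h0, zero_smul]
    apply Quot.sound
    refine ⟨Units.mk0 a ha0, ?_⟩
    have h5 : φ (a • (φ.symm ⟨c.1, c.2.1⟩ : Fin k → F)) = ⟨c'.1, c'.2.1⟩ := by
      rw [ha, LinearEquiv.apply_symm_apply]
    rw [_root_.map_smul, LinearEquiv.apply_symm_apply] at h5
    have h6 : a • c.1 = c'.1 := congrArg Subtype.val h5
    show (Units.mk0 a ha0 : Fˣ) • c.1 = c'.1
    rw [Units.smul_def]
    exact h6
  have hMinCard : numMinimal C = (Set.range μ).ncard := by
    unfold numMinimal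
    exact quot_card_eq_range _ μ hrel h2
  -- all points
  set Pts : Set (Submodule F (Fin k → F)) := {P | Module.finrank F P = 1} with hPts
  have hPtsCard : Pts.ncard = θ := by
    rw [← Nat.card_coe_set_eq]
    exact nat_card_rank1
  have hMinSub : Set.range μ ⊆ Pts := by
    rintro _ ⟨c, rfl⟩
    exact finrank_span_singleton (x_ne c)
  set NMin : Set (Submodule F (Fin k → F)) := Pts \ Set.range μ with hNMin
  have hNMinCard : NMin.ncard = θ - numMinimal C := by
    rw [hNMin, Set.ncard_diff hMinSub, hPtsCard, hMinCard]
  have h_r_le : r ≤ NMin.ncard := by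
    rw [hNMinCard]
    omega
  -- pick r distinct non-minimal points
  haveI : Fintype ↥NMin := Fintype.ofFinite _
  have h_r_le' : Fintype.card (Fin r) ≤ Fintype.card ↥NMin := by
    rw [Fintype.card_fin]
    rw [← Nat.card_coe_set_eq, Nat.card_eq_fintype_card] at h_r_le
    exact h_r_le
  obtain ⟨emb⟩ := Function.Embedding.nonempty_of_card_le h_r_le'
  -- per-index data
  have hdata : ∀ i : Fin r, ∃ v x' : Fin k → F, v ≠ 0 ∧ x' ≠ 0 ∧
      Submodule.span F {v} = ((emb i : ↥NMin) : Submodule F (Fin k → F)) ∧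
      (∀ idx, dpL v (g idx) = 0 → dpL x' (g idx) = 0) ∧
      LinearMap.ker (dpL (x' : Fin k → F)) ≠ LinearMap.ker (dpL v) := by
    intro i
    obtain ⟨P, hPmem⟩ := emb i
    obtain ⟨hP1, hP2⟩ := hPmem
    have hP1' : Module.finrank F P = 1 := hP1
    have hPbot : P ≠ ⊥ := by
      intro h
      rw [h, finrank_bot] at hP1'
      omega
    obtain ⟨v, hvP, hv0⟩ := (Submodule.ne_bot_iff P).1 hPbot
    have hspan : Submodule.span F {v} = P := span_eq_of_rank1' hP1' hvP hv0
    have hc0 : w v ≠ 0 := fun h => hv0 (hw0 v h)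
    have hnotmin : ¬ IsMinimalCodeword C (w v) := by
      intro hmin
      apply hP2
      refine ⟨⟨w v, hmin⟩, ?_⟩
      show Submodule.span F {(φ.symm ⟨w v, hmin.1⟩ : Fin k → F)} = P
      have : φ.symm ⟨w v, hmin.1⟩ = v := by
        have : (⟨w v, hmin.1⟩ : C) = φ v := rfl
        rw [this, LinearEquiv.symm_apply_apply]
      rw [this, hspan]
    have hex : ∃ c' ∈ C, c' ≠ 0 ∧ wordSupp c' ⊂ wordSupp (w v) := by
      by_contra hnc
      push_neg at hnc
      exact hnotmin ⟨hwC v, hc0, fun c' hc' hc'0 => hnc c' hc' hc'0⟩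
    obtain ⟨c', hc'C, hc'0, hsub⟩ := hex
    refine ⟨v, φ.symm ⟨c', hc'C⟩, hv0, ?_, hspan, ?_, ?_⟩
    · intro h0
      apply hc'0
      rw [← hwinv c' hc'C, h0]
      show w 0 = 0
      have : w 0 = (φ 0 : Fin n → F) := rfl
      rw [this, map_zero]
      rfl
    · intro idx hidx
      have hcv : w v idx = 0 := by rw [hkey]; exact hidx
      have hc'idx : c' idx = 0 := by
        by_contra hne
        have : idx ∈ wordSupp c' := hne
        have := hsub.1 this
        exact this hcv
      rw [← hkey, hwinv c' hc'C]
      exact hc'idx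
    · intro hker
      obtain ⟨a, ha⟩ := ker_dpL_prop hv0 (le_of_eq hker.symm)
      have ha0 : a ≠ 0 := by
        intro h0
        apply hc'0
        rw [← hwinv c' hc'C, ha, h0, zero_smul]
        show w 0 = 0
        have : w 0 = (φ 0 : Fin n → F) := rfl
        rw [this, map_zero]; rfl
      have hc'eq : c' = a • w v := by
        rw [← hwinv c' hc'C, ha, hwsmul]
      have hsupp_eq : wordSupp c' = wordSupp (w v) := by
        rw [hc'eq]
        ext idx
        simp [wordSupp, Pi.smul_apply, smul_eq_mul, ha0]
      rw [hsupp_eq] at hsub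
      exact ssubset_irrefl _ hsub
  choose v x' hv0 hx'0 hspan hsupp hker using hdata
  set H : Fin r → Submodule F (Fin k → F) :=
    fun i => LinearMap.ker (dpL (v i)) with hH
  set U : Fin r → Submodule F (Fin k → F) :=
    fun i => H i ⊓ LinearMap.ker (dpL (x' i)) with hU
  have hHrank : ∀ i, Module.finrank F (H i) = k - 1 :=
    fun i => finrank_ker_dpL (hv0 i)
  have hUrank : ∀ i, Module.finrank F (U i) = k - 2 := by
    intro i
    exact finrank_inf_hyperplanes (hHrank i) (finrank_ker_dpL (hx'0 i))
      (fun h => hker i h.symm) hk2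
  have hUle : ∀ i, U i ≤ H i := fun i => inf_le_left
  have Hinj : Function.Injective H := by
    intro i j hij
    obtain ⟨a, ha⟩ := ker_dpL_prop (hv0 i) (le_of_eq hij)
    have ha0 : a ≠ 0 := by
      intro h0
      apply hv0 j
      rw [ha, h0, zero_smul]
    have hspan_eq : Submodule.span F {v j} = Submodule.span F {v i} := by
      rw [ha]
      exact Submodule.span_singleton_smul_eq (Ne.isUnit ha0) _
    have : ((emb j : ↥NMin) : Submodule F (Fin k → F))
        = ((emb i : ↥NMin) : Submodule F (Fin k → F)) := by
      rw [← hspan j, ← hspan i, hspan_eq]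
    exact (emb.injective (Subtype.ext this)).symm
  -- the blocking set S
  set S : Set (Submodule F (Fin k → F)) :=
    {P | Module.finrank F P = 1 ∧ ∃ i, P ≤ H i ∧ ¬ P ≤ U i} with hS
  have halpha : alphaQ F k r ≤ S.ncard := by
    apply Nat.sInf_le
    exact ⟨S, rfl, H, U, Hinj, hHrank, hUrank, hUle,
      fun P hP hex => ⟨hP, hex⟩⟩
  set ColSet : Set (Submodule F (Fin k → F)) :=
    Set.range (fun i => Submodule.span F {g i}) with hColSet
  have hCol_sub : ColSet ⊆ Pts := by
    rintro _ ⟨i, rfl⟩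
    exact finrank_span_singleton (hg0 i)
  have hColCard : ColSet.ncard = n := by
    rw [hColSet, ← Set.image_univ, Set.ncard_image_of_injective _ colinj,
      Set.ncard_univ, Nat.card_eq_fintype_card, Fintype.card_fin]
  have hSsub : S ⊆ Pts \ ColSet := by
    rintro P ⟨hP1, i0, hle, hnle⟩
    refine ⟨hP1, ?_⟩
    rintro ⟨idx, rfl⟩
    apply hnle
    have hg_mem : g idx ∈ H i0 := by
      apply hle
      exact Submodule.mem_span_singleton_self _
    have hzero : dpL (v i0) (g idx) = 0 := hg_mem
    have hzero' : dpL (x' i0) (g idx) = 0 := hsupp i0 idx hzero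
    apply Submodule.span_le.2
    rw [Set.singleton_subset_iff]
    exact ⟨hg_mem, hzero'⟩
  have hScard : S.ncard ≤ θ - n := by
    calc S.ncard ≤ (Pts \ ColSet).ncard :=
          Set.ncard_le_ncard hSsub (Set.toFinite _)
      _ = θ - n := by rw [Set.ncard_diff hCol_sub, hPtsCard, hColCard]
  have hn_le : n ≤ θ := by
    rw [← hColCard, ← hPtsCard]
    exact Set.ncard_le_ncard hCol_sub (Set.toFinite _)
  omega
end

section
/- For every prime power q, every integer k ≥ 3 and every integer r ≥ 1, α_q(k,r) ≥ r·q^{k−2} − C(r,2)·q^{k−3}, where C(r,2) is the binomial coefficient r choose 2. -/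
open scoped Classical
open Matrix

lemma aux_bonferroni {X ι : Type*} [DecidableEq X] [DecidableEq ι] (A : ι → Finset X) (s : Finset ι) :
    2 * ∑ i ∈ s, (A i).card ≤
      2 * (s.biUnion A).card + ∑ p ∈ s.offDiag, (A p.1 ∩ A p.2).card := by
  induction s using Finset.induction_on with
  | empty => simp
  | @insert a s ha ih =>
    rw [Finset.sum_insert ha, Finset.biUnion_insert, Finset.offDiag_insert ha]
    have hd1 : Disjoint (s.offDiag ∪ {a} ×ˢ s) (s ×ˢ {a}) := by
      rw [Finset.disjoint_left]
      rintro ⟨x, y⟩ hx hy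
      simp only [Finset.mem_union, Finset.mem_offDiag, Finset.mem_product,
        Finset.mem_singleton] at hx hy
      rcases hx with h | h
      · exact ha (hy.2 ▸ h.2.1)
      · exact ha (hy.2 ▸ h.2)
    have hd2 : Disjoint (s.offDiag) ({a} ×ˢ s) := by
      rw [Finset.disjoint_left]
      rintro ⟨x, y⟩ hx hy
      simp only [Finset.mem_offDiag, Finset.mem_product, Finset.mem_singleton] at hx hy
      exact ha (hy.1 ▸ hx.1)
    rw [Finset.sum_union hd1, Finset.sum_union hd2]
    have e1 : ∑ p ∈ {a} ×ˢ s, (A p.1 ∩ A p.2).card = ∑ i ∈ s, (A a ∩ A i).card := by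
      rw [Finset.sum_product, Finset.sum_singleton]
    have e2 : ∑ p ∈ s ×ˢ {a}, (A p.1 ∩ A p.2).card = ∑ i ∈ s, (A a ∩ A i).card := by
      rw [Finset.sum_product]
      exact Finset.sum_congr rfl fun i _ => by rw [Finset.sum_singleton, Finset.inter_comm]
    rw [e1, e2]
    have key : (A a).card + (s.biUnion A).card
        ≤ (A a ∪ s.biUnion A).card + ∑ i ∈ s, (A a ∩ A i).card := by
      rw [← Finset.card_union_add_card_inter]
      have : A a ∩ s.biUnion A = s.biUnion fun i => A a ∩ A i := by
        ext x; simp [Finset.mem_biUnion]; tauto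
      rw [this]
      exact Nat.add_le_add_left (Finset.card_biUnion_le) _
    omega

lemma aux_submodule_finite (F : Type) [Field F] [Fintype F] (k : ℕ) :
    Finite (Submodule F (Fin k → F)) :=
  Finite.of_injective (fun W => (W : Set (Fin k → F))) SetLike.coe_injective

lemma aux_point_count {F : Type} [Field F] [Fintype F] {k : ℕ}
    [Fintype (Submodule F (Fin k → F))]
    (W U : Submodule F (Fin k → F)) :
    (Finset.univ.filter (fun P : Submodule F (Fin k → F) =>
        Module.finrank F P = 1 ∧ P ≤ W ∧ ¬ P ≤ U)).card * (Fintype.card F - 1)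
      = Fintype.card F ^ Module.finrank F ↥W
        - Fintype.card F ^ Module.finrank F ↥(U ⊓ W) := by
  set q := Fintype.card F with hq
  set A := Finset.univ.filter (fun P : Submodule F (Fin k → F) =>
      Module.finrank F P = 1 ∧ P ≤ W ∧ ¬ P ≤ U) with hA
  set T : Finset (Fin k → F) := Finset.univ.filter (fun v => v ∈ W ∧ v ∉ U) with hTdef
  have hmap : ∀ v ∈ T, Submodule.span F {v} ∈ A := by
    intro v hv
    rw [hTdef, Finset.mem_filter] at hv
    obtain ⟨-, hvW, hvU⟩ := hv
    have hv0 : v ≠ 0 := fun h => hvU (h ▸ U.zero_mem)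
    rw [hA, Finset.mem_filter]
    refine ⟨Finset.mem_univ _, finrank_span_singleton hv0,
      Submodule.span_le.2 (by simpa using hvW),
      fun hle => hvU (hle (Submodule.mem_span_singleton_self v))⟩
  have hT : T.card = ∑ P ∈ A, (T.filter (fun v => Submodule.span F {v} = P)).card :=
    Finset.card_eq_sum_card_fiberwise hmap
  have hcardP : ∀ P : Submodule F (Fin k → F),
      (Finset.univ.filter (fun v => v ∈ P)).card = q ^ Module.finrank F ↥P := by
    intro P
    rw [← Fintype.card_subtype]
    exact Module.card_eq_pow_finrank (K := F) (V := ↥P)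
  have hfiber : ∀ P ∈ A, (T.filter (fun v => Submodule.span F {v} = P)).card = q - 1 := by
    intro P hP
    rw [hA, Finset.mem_filter] at hP
    obtain ⟨-, h1, hW, hU⟩ := hP
    have heq : T.filter (fun v => Submodule.span F {v} = P)
        = (Finset.univ.filter (fun v => v ∈ P)) \ {0} := by
      ext v
      simp only [hTdef, Finset.mem_filter, Finset.mem_univ, true_and, Finset.mem_sdiff,
        Finset.mem_singleton, Finset.filter_filter]
      constructor
      · rintro ⟨⟨hvW, hvU⟩, hsp⟩
        refine ⟨hsp ▸ Submodule.mem_span_singleton_self v, fun h => hvU (h ▸ U.zero_mem)⟩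
      · rintro ⟨hvP, hv0⟩
        have hsp : Submodule.span F {v} = P := by
          apply Submodule.eq_of_le_of_finrank_le (Submodule.span_le.2 (by simpa using hvP))
          rw [h1, finrank_span_singleton hv0]
        refine ⟨⟨hW (hsp ▸ Submodule.mem_span_singleton_self v), fun hvU => ?_⟩, hsp⟩
        exact hU (hsp ▸ Submodule.span_le.2 (by simpa using hvU))
    rw [heq, Finset.card_sdiff_of_subset (by simp [P.zero_mem]), hcardP, Finset.card_singleton, h1, pow_one]
  have hTcard : T.card = q ^ Module.finrank F ↥W - q ^ Module.finrank F ↥(U ⊓ W) := by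
    have heq : T = (Finset.univ.filter (fun v => v ∈ W))
        \ (Finset.univ.filter (fun v => v ∈ U ⊓ W)) := by
      ext v
      simp only [hTdef, Finset.mem_filter, Finset.mem_univ, true_and, Finset.mem_sdiff,
        Submodule.mem_inf]
      tauto
    rw [heq, Finset.card_sdiff_of_subset (by intro v; simp only [Finset.mem_filter, Submodule.mem_inf]; tauto),
      hcardP, hcardP]
  rw [Finset.sum_congr rfl hfiber, Finset.sum_const, smul_eq_mul] at hT
  rw [← hT, hTcard]

lemma aux_ker_rank_of_ne_zero {F : Type} [Field F] {k : ℕ} (f : (Fin k → F) →ₗ[F] F)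
    (v : Fin k → F) (hv : f v ≠ 0) : Module.finrank F ↥(LinearMap.ker f) = k - 1 := by
  have hrange : LinearMap.range f = ⊤ := by
    rw [eq_top_iff]
    intro c _
    refine ⟨(c * (f v)⁻¹) • v, ?_⟩
    rw [LinearMap.map_smul, smul_eq_mul, mul_assoc, inv_mul_cancel₀ hv, mul_one]
  have := LinearMap.finrank_range_add_finrank_ker f
  rw [hrange, finrank_top, Module.finrank_self, Module.finrank_fin_fun] at this
  omega

lemma aux_exists_config (F : Type) [Field F] [Fintype F] (k r : ℕ) (hk : 3 ≤ k)
    (hr : r ≤ Fintype.card F * Fintype.card F) :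
    ∃ H U : Fin r → Submodule F (Fin k → F),
      Function.Injective H ∧
      (∀ i, Module.finrank F ↥(H i) = k - 1) ∧
      (∀ i, Module.finrank F ↥(U i) = k - 2) ∧
      (∀ i, U i ≤ H i) := by
  have hcard : Fintype.card (Fin r) ≤ Fintype.card (F × F) := by
    simpa using hr
  obtain ⟨e⟩ := Function.Embedding.nonempty_of_card_le hcard
  set i0 : Fin k := ⟨0, by omega⟩
  set i1 : Fin k := ⟨1, by omega⟩
  set i2 : Fin k := ⟨2, by omega⟩
  have h01 : i0 ≠ i1 := by simp [i0, i1, Fin.ext_iff]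
  have h02 : i0 ≠ i2 := by simp [i0, i2, Fin.ext_iff]
  have h12 : i1 ≠ i2 := by simp [i1, i2, Fin.ext_iff]
  set f : F → F → ((Fin k → F) →ₗ[F] F) := fun a b =>
    LinearMap.proj i0 + a • LinearMap.proj i1 + b • LinearMap.proj i2 with hf
  have hfapp : ∀ a b v, f a b v = v i0 + a * v i1 + b * v i2 := by
    intro a b v; simp [hf]
  set va : F → (Fin k → F) := fun a j => if j = i0 then -a else if j = i1 then 1 else 0 with hva
  set wb : F → (Fin k → F) := fun b j => if j = i0 then -b else if j = i2 then 1 else 0 with hwb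
  have hva_mem : ∀ a b, f a b (va a) = 0 := by
    intro a b
    rw [hfapp]
    simp [hva, h01.symm, h02.symm, h12.symm]
  have hwb_mem : ∀ a b, f a b (wb b) = 0 := by
    intro a b
    rw [hfapp]
    simp [hwb, h01.symm, h02.symm, h12, h12.symm]
  have hker_inj : ∀ a b a' b', LinearMap.ker (f a b) = LinearMap.ker (f a' b') →
      a = a' ∧ b = b' := by
    intro a b a' b' hker
    have h1 : f a' b' (va a) = 0 := by
      rw [← LinearMap.mem_ker, ← hker, LinearMap.mem_ker]; exact hva_mem a b
    have h2 : f a' b' (wb b) = 0 := by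
      rw [← LinearMap.mem_ker, ← hker, LinearMap.mem_ker]; exact hwb_mem a b
    rw [hfapp] at h1 h2
    simp [hva, hwb, h01.symm, h02.symm, h12, h12.symm] at h1 h2
    constructor
    · linear_combination -h1
    · linear_combination -h2
  set H : Fin r → Submodule F (Fin k → F) :=
    fun i => LinearMap.ker (f (e i).1 (e i).2) with hH
  set K1 : Submodule F (Fin k → F) :=
    LinearMap.ker (LinearMap.proj (R := F) (φ := fun _ : Fin k => F) i1) with hK1
  set U : Fin r → Submodule F (Fin k → F) := fun i => H i ⊓ K1 with hU
  have hHrank : ∀ i, Module.finrank F ↥(H i) = k - 1 := by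
    intro i
    apply aux_ker_rank_of_ne_zero _ (Pi.single i0 1)
    rw [hfapp]
    simp [Pi.single_eq_of_ne (Ne.symm h01), Pi.single_eq_of_ne (Ne.symm h02)]
  have hK1rank : Module.finrank F ↥K1 = k - 1 := by
    apply aux_ker_rank_of_ne_zero _ (Pi.single i1 1)
    simp
  have hva_notK1 : ∀ a, va a ∉ K1 := by
    intro a h
    rw [hK1, LinearMap.mem_ker] at h
    simp [hva, h01.symm] at h
  have hUrank : ∀ i, Module.finrank F ↥(U i) = k - 2 := by
    intro i
    have hsup : Module.finrank F ↥(H i ⊔ K1) = k := by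
      have hlt : K1 < H i ⊔ K1 := by
        refine lt_of_le_of_ne le_sup_right (fun hEq => ?_)
        have hm : va (e i).1 ∈ H i := by rw [hH, LinearMap.mem_ker]; exact hva_mem _ _
        have hmem : va (e i).1 ∈ H i ⊔ K1 := (le_sup_left : H i ≤ H i ⊔ K1) hm
        rw [← hEq] at hmem
        exact hva_notK1 _ hmem
      have h1 := Submodule.finrank_lt_finrank_of_lt hlt
      have h2 : Module.finrank F ↥(H i ⊔ K1) ≤ k := by
        have := Submodule.finrank_le (H i ⊔ K1)
        rwa [Module.finrank_fin_fun] at this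
      rw [hK1rank] at h1
      omega
    have := Submodule.finrank_sup_add_finrank_inf_eq (H i) K1
    rw [hsup, hHrank i, hK1rank] at this
    show Module.finrank F ↥(H i ⊓ K1) = k - 2
    omega
  have hHinj : Function.Injective H := by
    intro i j hij
    rw [hH] at hij
    obtain ⟨h1, h2⟩ := hker_inj _ _ _ _ hij
    exact e.injective (Prod.ext h1 h2)
  exact ⟨H, U, hHinj, hHrank, hUrank, fun i => inf_le_left⟩

lemma aux_choose_two (r : ℕ) : r.choose 2 * 2 = r * (r - 1) := by
  rw [Nat.choose_two_right]
  refine Nat.div_mul_cancel ?_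
  rcases Nat.even_or_odd r with h | h
  · exact Dvd.dvd.mul_right h.two_dvd _
  · cases r with
    | zero => simp
    | succ n =>
      have : Even n := by
        rcases Nat.even_or_odd n with h' | h'
        · exact h'
        · exact absurd (h'.add_one) (by simpa using h)
      exact Dvd.dvd.mul_left (by simpa [Nat.succ_sub_one] using this.two_dvd) _


/-- for every prime power `q`, `k ≥ 3` and `r ≥ 1`,
`α_q(k,r) ≥ r·q^(k-2) - C(r,2)·q^(k-3)`. -/
theorem statement_7 {F : Type} [Field F] [Fintype F] {q k r : ℕ}
    (hq : Fintype.card F = q) (hk : 3 ≤ k) (hr : 1 ≤ r) :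
    alphaQ F k r ≥ r * q ^ (k - 2) - r.choose 2 * q ^ (k - 3) := by
  have hq2 : 2 ≤ q := by rw [← hq]; exact Fintype.one_lt_card
  haveI : Finite (Submodule F (Fin k → F)) := aux_submodule_finite F k
  haveI : Fintype (Submodule F (Fin k → F)) := Fintype.ofFinite _
  have hpow2 : q ^ (k - 2) = q ^ (k - 3) * q := by
    rw [← pow_succ]; congr 1; omega
  have hpow1 : q ^ (k - 1) = q ^ (k - 2) * q := by
    rw [← pow_succ]; congr 1; omega
  -- main bound
  have hmain : ∀ m, (∃ S : Set (Submodule F (Fin k → F)), S.ncard = m ∧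
      ∃ H U : Fin r → Submodule F (Fin k → F),
        Function.Injective H ∧
        (∀ i, Module.finrank F (H i) = k - 1) ∧
        (∀ i, Module.finrank F (U i) = k - 2) ∧
        (∀ i, U i ≤ H i) ∧
        ∀ P : Submodule F (Fin k → F), Module.finrank F P = 1 →
          (∃ i, P ≤ H i ∧ ¬ P ≤ U i) → P ∈ S) →
      r * q ^ (k - 2) - r.choose 2 * q ^ (k - 3) ≤ m := by
    rintro m ⟨S, hS, H, U, hinj, hHr, hUr, hle, hcover⟩
    set A : Fin r → Finset (Submodule F (Fin k → F)) := fun i =>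
      Finset.univ.filter (fun P => Module.finrank F P = 1 ∧ P ≤ H i ∧ ¬ P ≤ U i) with hA
    have hAcard : ∀ i, (A i).card = q ^ (k - 2) := by
      intro i
      have hpc := aux_point_count (H i) (U i)
      rw [hq, inf_eq_left.2 (hle i), hHr i, hUr i] at hpc
      have hrhs : q ^ (k - 1) - q ^ (k - 2) = q ^ (k - 2) * (q - 1) := by
        rw [hpow1, Nat.mul_sub, Nat.mul_one]
      rw [hrhs] at hpc
      exact Nat.eq_of_mul_eq_mul_right (by omega) hpc
    have hABcard : ∀ i j, i ≠ j → (A i ∩ A j).card ≤ q ^ (k - 3) := by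
      intro i j hij
      set W := H i ⊓ H j with hW
      have hsub : A i ∩ A j ⊆ Finset.univ.filter
          (fun P => Module.finrank F P = 1 ∧ P ≤ W ∧ ¬ P ≤ U i) := by
        intro P hP
        rw [Finset.mem_inter, hA, Finset.mem_filter, Finset.mem_filter] at hP
        rw [Finset.mem_filter]
        exact ⟨Finset.mem_univ _, hP.1.2.1, le_inf hP.1.2.2.1 hP.2.2.2.1, hP.1.2.2.2⟩
      have hdW : Module.finrank F ↥W ≤ k - 2 := by
        have hWlt : W < H i := by
          refine lt_of_le_of_ne inf_le_left (fun hEq => ?_)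
          have : H i ≤ H j := hEq ▸ inf_le_right
          have : H i = H j := Submodule.eq_of_le_of_finrank_le this (by rw [hHr i, hHr j])
          exact hij (hinj this)
        have := Submodule.finrank_lt_finrank_of_lt hWlt
        rw [hHr i] at this
        omega
      have hinfle : Module.finrank F ↥(U i ⊓ W) ≤ Module.finrank F ↥W :=
        Submodule.finrank_mono inf_le_right
      have hinfge : Module.finrank F ↥W ≤ Module.finrank F ↥(U i ⊓ W) + 1 := by
        have hsuple : Module.finrank F ↥(U i ⊔ W) ≤ k - 1 := by
          have h1 : U i ⊔ W ≤ H i := sup_le (hle i) inf_le_left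
          have := Submodule.finrank_mono h1
          rwa [hHr i] at this
        have := Submodule.finrank_sup_add_finrank_inf_eq (U i) W
        rw [hUr i] at this
        omega
      have hpc := aux_point_count W (U i)
      rw [hq] at hpc
      have hbound : q ^ Module.finrank F ↥W - q ^ Module.finrank F ↥(U i ⊓ W)
          ≤ q ^ (k - 3) * (q - 1) := by
        by_cases heq : Module.finrank F ↥(U i ⊓ W) = Module.finrank F ↥W
        · rw [heq]; simp
        · have h1 : Module.finrank F ↥(U i ⊓ W) = Module.finrank F ↥W - 1 := by omega
          have h2 : 1 ≤ Module.finrank F ↥W := by omega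
          have h3 : q ^ Module.finrank F ↥W = q ^ (Module.finrank F ↥W - 1) * q := by
            rw [← pow_succ]; congr 1; omega
          rw [h1, h3]
          have hre : q ^ (Module.finrank F ↥W - 1) * q - q ^ (Module.finrank F ↥W - 1)
              = q ^ (Module.finrank F ↥W - 1) * (q - 1) := by
            rw [Nat.mul_sub, Nat.mul_one]
          rw [hre]
          exact Nat.mul_le_mul_right _ (Nat.pow_le_pow_right (by omega) (by omega))
      have hfilter : (Finset.univ.filter
          (fun P : Submodule F (Fin k → F) =>
            Module.finrank F P = 1 ∧ P ≤ W ∧ ¬ P ≤ U i)).card ≤ q ^ (k - 3) := by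
        refine Nat.le_of_mul_le_mul_right ?_ (show 0 < q - 1 by omega)
        rw [hpc]
        exact hbound
      exact le_trans (Finset.card_le_card hsub) hfilter
    -- union contained in S
    have hunion : ((Finset.univ.biUnion A : Finset (Submodule F (Fin k → F))) :
        Set (Submodule F (Fin k → F))) ⊆ S := by
      intro P hP
      rw [Finset.coe_biUnion] at hP
      simp only [Set.mem_iUnion, Finset.coe_filter, Set.mem_setOf_eq, Finset.mem_coe,
        Finset.mem_univ, true_and, hA, Finset.mem_filter] at hP
      obtain ⟨i, -, h1, h2, h3⟩ := hP
      exact hcover P h1 ⟨i, h2, h3⟩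
    have hm : (Finset.univ.biUnion A).card ≤ m := by
      rw [← hS, ← Set.ncard_coe_finset]
      exact Set.ncard_le_ncard hunion (Set.toFinite S)
    -- Bonferroni
    have hb := aux_bonferroni A Finset.univ
    have hsum1 : ∑ i : Fin r, (A i).card = r * q ^ (k - 2) := by
      rw [Finset.sum_congr rfl (fun i _ => hAcard i), Finset.sum_const, Finset.card_univ,
        Fintype.card_fin, smul_eq_mul]
    have hsum2 : ∑ p ∈ (Finset.univ : Finset (Fin r)).offDiag, (A p.1 ∩ A p.2).card
        ≤ (r * r - r) * q ^ (k - 3) := by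
      have := Finset.sum_le_card_nsmul (Finset.univ : Finset (Fin r)).offDiag
        (fun p => (A p.1 ∩ A p.2).card) (q ^ (k - 3))
        (fun p hp => hABcard p.1 p.2 (Finset.mem_offDiag.1 hp).2.2)
      rwa [Finset.offDiag_card, Finset.card_univ, Fintype.card_fin, smul_eq_mul] at this
    have hrr : r * r - r = r.choose 2 * 2 := by
      rw [aux_choose_two]
      cases r with
      | zero => simp
      | succ n => simp [Nat.succ_sub_one, Nat.mul_succ, Nat.succ_mul]
    rw [hsum1] at hb
    rw [hrr] at hsum2
    -- final arithmetic
    have h1 : 2 * (r * q ^ (k - 2)) ≤ 2 * m + r.choose 2 * 2 * q ^ (k - 3) := by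
      calc 2 * (r * q ^ (k - 2))
          ≤ 2 * (Finset.univ.biUnion A).card
            + ∑ p ∈ (Finset.univ : Finset (Fin r)).offDiag, (A p.1 ∩ A p.2).card := hb
        _ ≤ 2 * m + r.choose 2 * 2 * q ^ (k - 3) := by
            exact Nat.add_le_add (Nat.mul_le_mul_left 2 hm) hsum2
    have h2 : r * q ^ (k - 2) ≤ m + r.choose 2 * q ^ (k - 3) := by
      refine Nat.le_of_mul_le_mul_left ?_ (show 0 < 2 by omega)
      calc 2 * (r * q ^ (k - 2)) ≤ 2 * m + r.choose 2 * 2 * q ^ (k - 3) := h1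
        _ = 2 * (m + r.choose 2 * q ^ (k - 3)) := by ring
    omega
  -- trivial case or nonemptiness
  by_cases hble : r * q ^ (k - 2) ≤ r.choose 2 * q ^ (k - 3)
  · rw [Nat.sub_eq_zero_of_le hble]
    exact Nat.zero_le _
  push_neg at hble
  have hrq : r ≤ q * q := by
    by_contra hcon
    push_neg at hcon
    have h2q : 2 * q ≤ q * q := Nat.mul_le_mul_right q hq2
    have h1 : r * (2 * q) ≤ r * (r - 1) := Nat.mul_le_mul_left r (by omega)
    have h2c := aux_choose_two r
    have h1' : r * q * 2 ≤ r.choose 2 * 2 := by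
      calc r * q * 2 = r * (2 * q) := by ring
        _ ≤ r * (r - 1) := h1
        _ = r.choose 2 * 2 := h2c.symm
    have h2 : r * q ≤ r.choose 2 := Nat.le_of_mul_le_mul_right h1' (by omega)
    have h3 : r * q * q ^ (k - 3) ≤ r.choose 2 * q ^ (k - 3) :=
      Nat.mul_le_mul_right _ h2
    have h5 : r * q ^ (k - 2) ≤ r.choose 2 * q ^ (k - 3) := by
      calc r * q ^ (k - 2) = r * q * q ^ (k - 3) := by rw [hpow2]; ring
        _ ≤ r.choose 2 * q ^ (k - 3) := h3
    exact absurd h5 (Nat.not_le.2 hble)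
  obtain ⟨H, U, hinj, hHr, hUr, hle⟩ := aux_exists_config F k r hk (by rw [hq]; exact hrq)
  have hne : {m | ∃ S : Set (Submodule F (Fin k → F)), S.ncard = m ∧
      ∃ H U : Fin r → Submodule F (Fin k → F),
        Function.Injective H ∧
        (∀ i, Module.finrank F (H i) = k - 1) ∧
        (∀ i, Module.finrank F (U i) = k - 2) ∧
        (∀ i, U i ≤ H i) ∧
        ∀ P : Submodule F (Fin k → F), Module.finrank F P = 1 →
          (∃ i, P ≤ H i ∧ ¬ P ≤ U i) → P ∈ S}.Nonempty := by
    refine ⟨(Set.univ : Set (Submodule F (Fin k → F))).ncard, Set.univ, rfl,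
      H, U, hinj, hHr, hUr, hle, fun P _ _ => Set.mem_univ P⟩
  exact hmain _ (Nat.sInf_mem hne)
end

section
/- Let C be a projective [n,k]_q code with associated point set 𝒫 in 𝔽_q^k, and let D be an l-dimensional subcode of C with associated subspace W_D of codimension l. Then D is support-minimal if and only if the linear span of the points of 𝒫 contained in W_D equals W_D, i.e., if and only if dim ⟨𝒫 ∩ W_D⟩ = k − l. -/
open scoped Classical
open Matrix

/-- The subspace `W_D ≤ F^k` associated to a subcode `D` of the code generated by `G`:
`W_D = {x | m ⬝ᵥ x = 0 for all m with m ᵥ* G ∈ D}`. -/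
def assocSubspace {F : Type} [Field F] {n k : ℕ} (G : Matrix (Fin k) (Fin n) F)
    (D : Submodule F (Fin n → F)) : Submodule F (Fin k → F) where
  carrier := {x | ∀ m : Fin k → F, Matrix.vecMul m G ∈ D → dotProduct m x = 0}
  add_mem' := by
    intro x y hx hy m hm
    rw [dotProduct_add, hx m hm, hy m hm, add_zero]
  zero_mem' := by
    intro m hm
    exact dotProduct_zero m
  smul_mem' := by
    intro a x hx m hm
    rw [dotProduct_smul, hx m hm, smul_zero]

section Aux

open Module Submodule

variable {F : Type} [Field F] {k : ℕ}

/-- Orthogonal complement w.r.t. the dot product on `Fin k → F`. -/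
def perpSub (M : Submodule F (Fin k → F)) : Submodule F (Fin k → F) where
  carrier := {x | ∀ m ∈ M, dotProduct m x = 0}
  add_mem' := by
    intro x y hx hy m hm
    rw [dotProduct_add, hx m hm, hy m hm, add_zero]
  zero_mem' := by
    intro m _
    exact dotProduct_zero m
  smul_mem' := by
    intro a x hx m hm
    rw [dotProduct_smul, hx m hm, smul_zero]

lemma mem_perpSub {M : Submodule F (Fin k → F)} {x : Fin k → F} :
    x ∈ perpSub M ↔ ∀ m ∈ M, dotProduct m x = 0 := Iff.rfl

/-- The dot-product pairing as a linear map to the dual. -/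
def dotPairing : (Fin k → F) →ₗ[F] Module.Dual F (Fin k → F) where
  toFun x :=
    { toFun := fun m => dotProduct m x
      map_add' := fun a b => add_dotProduct a b x
      map_smul' := fun c a => smul_dotProduct c a x }
  map_add' x y := LinearMap.ext fun m => dotProduct_add m x y
  map_smul' c x := LinearMap.ext fun m => dotProduct_smul c m x

lemma dotPairing_injective : Function.Injective (dotPairing (F := F) (k := k)) := by
  rw [← LinearMap.ker_eq_bot, eq_bot_iff]
  intro x hx
  have hx' : ∀ m : Fin k → F, dotProduct m x = 0 := fun m => by
    exact LinearMap.congr_fun (LinearMap.mem_ker.mp hx) m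
  have : x = 0 := by
    funext i
    have := hx' (Pi.single i 1)
    rwa [single_dotProduct, one_mul] at this
  simp [this]

lemma dotPairing_bijective : Function.Bijective (dotPairing (F := F) (k := k)) :=
  ⟨dotPairing_injective, by
    refine (LinearMap.injective_iff_surjective_of_finrank_eq_finrank ?_).mp
      dotPairing_injective
    rw [Subspace.dual_finrank_eq]⟩

/-- `dotPairing` as a linear equivalence. -/
noncomputable def dotEquiv : (Fin k → F) ≃ₗ[F] Module.Dual F (Fin k → F) :=
  LinearEquiv.ofBijective dotPairing dotPairing_bijective

lemma perpSub_eq_comap (M : Submodule F (Fin k → F)) :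
    perpSub M = M.dualAnnihilator.comap (dotPairing (F := F) (k := k)) := by
  ext x
  simp [mem_perpSub, Submodule.mem_dualAnnihilator, dotPairing]

lemma finrank_perpSub (M : Submodule F (Fin k → F)) :
    finrank F (perpSub M) = k - finrank F M := by
  have h1 : perpSub M = M.dualAnnihilator.comap (dotEquiv (F := F) (k := k) :
      (Fin k → F) →ₗ[F] Module.Dual F (Fin k → F)) := perpSub_eq_comap M
  have h2 : finrank F (perpSub M) = finrank F M.dualAnnihilator := by
    rw [h1, Submodule.comap_equiv_eq_map_symm]
    exact (LinearEquiv.finrank_map_eq _ _)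
  have h3 : finrank F ((Fin k → F) ⧸ M) = finrank F M.dualAnnihilator :=
    LinearEquiv.finrank_eq (Subspace.quotEquivAnnihilator M)
  have h4 := Submodule.finrank_quotient_add_finrank M
  have h5 : finrank F (Fin k → F) = k := by simp
  omega

lemma le_perpSub_perpSub (M : Submodule F (Fin k → F)) : M ≤ perpSub (perpSub M) := by
  intro m hm x hx
  rw [dotProduct_comm]
  exact hx m hm

lemma perpSub_perpSub (M : Submodule F (Fin k → F)) : perpSub (perpSub M) = M := by
  have hk : finrank F M ≤ k := by
    simpa using Submodule.finrank_le M
  have h1 : finrank F (perpSub (perpSub M)) = finrank F M := by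
    rw [finrank_perpSub, finrank_perpSub]
    omega
  exact (Submodule.eq_of_le_of_finrank_eq (le_perpSub_perpSub M) h1.symm).symm

/-- Extend a submodule to one of any larger dimension. -/
lemma exists_le_finrank_eq {V : Type} [AddCommGroup V] [Module F V] [FiniteDimensional F V]
    (A : Submodule F V) (d : ℕ) (hA : finrank F A ≤ d) (hd : d ≤ finrank F V) :
    ∃ W : Submodule F V, A ≤ W ∧ finrank F W = d := by
  induction d with
  | zero =>
    exact ⟨A, le_rfl, Nat.le_zero.mp hA⟩
  | succ d ih =>
    rcases Nat.lt_or_ge (finrank F A) (d + 1) with hlt | hge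
    · obtain ⟨W, hAW, hWd⟩ := ih (Nat.lt_succ_iff.mp hlt) (le_trans (Nat.le_succ d) hd)
      have hWtop : W ≠ ⊤ := by
        intro h
        rw [h, finrank_top] at hWd
        omega
      have hWlt : W < ⊤ := hWtop.lt_top
      obtain ⟨x, -, hx⟩ := SetLike.exists_of_lt hWlt
      have hx0 : x ≠ 0 := fun h => hx (h ▸ W.zero_mem)
      refine ⟨W ⊔ Submodule.span F {x}, le_trans hAW le_sup_left, ?_⟩
      have hinf : W ⊓ Submodule.span F {x} = ⊥ := by
        rw [eq_bot_iff]
        rintro y ⟨hyW, hySpan⟩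
        obtain ⟨c, rfl⟩ := Submodule.mem_span_singleton.mp hySpan
        rcases eq_or_ne c 0 with rfl | hc
        · simp
        · refine absurd ?_ hx
          have h2 := W.smul_mem c⁻¹ hyW
          rwa [inv_smul_smul₀ hc] at h2
      have := Submodule.finrank_sup_add_finrank_inf_eq W (Submodule.span F {x})
      rw [hinf, finrank_bot, finrank_span_singleton hx0, hWd] at this
      omega
    · exact ⟨A, le_rfl, le_antisymm hA hge⟩

variable {n : ℕ} (G : Matrix (Fin k) (Fin n) F)

lemma vecMul_coord (m : Fin k → F) (i : Fin n) :
    Matrix.vecMul m G i = dotProduct m (Gᵀ i) := rfl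

/-- Support of the image subcode in terms of the perp subspace. -/
lemma supp_map_eq (M : Submodule F (Fin k → F)) :
    subcodeSupp (Submodule.map G.vecMulLinear M) = {i | Gᵀ i ∉ perpSub M} := by
  ext i
  constructor
  · rintro ⟨v, hv, hvi⟩
    obtain ⟨m, hm, rfl⟩ := hv
    intro hGi
    exact hvi (by rw [Matrix.vecMulLinear_apply, vecMul_coord]; exact hGi m hm)
  · intro hGi
    simp only [Set.mem_setOf_eq, mem_perpSub] at hGi
    push_neg at hGi
    obtain ⟨m, hm, hmi⟩ := hGi
    exact ⟨G.vecMulLinear m, Submodule.mem_map_of_mem hm,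
      by rwa [Matrix.vecMulLinear_apply, vecMul_coord]⟩

lemma assocSubspace_eq_perp (D : Submodule F (Fin n → F)) :
    assocSubspace G D = perpSub (Submodule.comap G.vecMulLinear D) := by
  ext x
  constructor
  · intro hx m hm
    exact hx m hm
  · intro hx m hm
    exact hx m hm

end Aux

/-- an `l`-dimensional subcode `D` of a projective `[n,k]_q` code with
generator matrix `G` is support-minimal iff the span of the points of `𝒫` (the columns
of `G`) contained in the associated codimension-`l` subspace `W_D` equals `W_D`. -/
theorem statement_13 {F : Type} [Field F] [Fintype F] {n k l : ℕ}
    (G : Matrix (Fin k) (Fin n) F)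
    (hrank : Module.finrank F (LinearMap.range G.vecMulLinear) = k)
    (hproj : IsProjective (LinearMap.range G.vecMulLinear))
    (D : Submodule F (Fin n → F)) (hD : D ≤ LinearMap.range G.vecMulLinear)
    (hDl : Module.finrank F D = l)
    (hW : Module.finrank F (assocSubspace G D) = k - l) :
    IsSupportMinimal (LinearMap.range G.vecMulLinear) D l ↔
      Submodule.span F
        {x : Fin k → F | (∃ i : Fin n, x = Gᵀ i) ∧ x ∈ assocSubspace G D} =
        assocSubspace G D := by
  classical
  have hfinpi : Module.finrank F (Fin k → F) = k := by simp
  have hinj : Function.Injective G.vecMulLinear := by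
    rw [← LinearMap.ker_eq_bot]
    have h1 := LinearMap.finrank_range_add_finrank_ker G.vecMulLinear
    rw [hrank, hfinpi] at h1
    have h0 : Module.finrank F (LinearMap.ker G.vecMulLinear) = 0 := by omega
    exact Submodule.finrank_eq_zero.mp h0
  have hMD : Submodule.map G.vecMulLinear (Submodule.comap G.vecMulLinear D) = D := by
    rw [Submodule.map_comap_eq]
    exact inf_eq_right.mpr hD
  have hMl : Module.finrank F (Submodule.comap G.vecMulLinear D) = l := by
    have h := LinearEquiv.finrank_eq
      (Submodule.equivMapOfInjective G.vecMulLinear hinj (Submodule.comap G.vecMulLinear D))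
    rw [hMD] at h
    rw [h, hDl]
  have hlk : l ≤ k := by
    have h := Submodule.finrank_le (Submodule.comap G.vecMulLinear D)
    rwa [hMl, hfinpi] at h
  have hsuppD : subcodeSupp D = {i | Gᵀ i ∉ assocSubspace G D} := by
    conv_lhs => rw [← hMD]
    rw [supp_map_eq, assocSubspace_eq_perp]
  constructor
  · intro hmin
    by_contra hne
    have hVle : Submodule.span F
        {x : Fin k → F | (∃ i : Fin n, x = Gᵀ i) ∧ x ∈ assocSubspace G D} ≤
        assocSubspace G D := Submodule.span_le.mpr fun x hx => hx.2
    have hVlt : Submodule.span F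
        {x : Fin k → F | (∃ i : Fin n, x = Gᵀ i) ∧ x ∈ assocSubspace G D} <
        assocSubspace G D := lt_of_le_of_ne hVle hne
    rcases Nat.eq_zero_or_pos l with hl0 | hlpos
    · -- l = 0 : both sides are ⊤, contradiction with strict inequality
      have hWtop : assocSubspace G D = ⊤ := by
        apply Submodule.eq_top_of_finrank_eq
        rw [hW, hl0, Nat.sub_zero, hfinpi]
      have hset : {x : Fin k → F | (∃ i : Fin n, x = Gᵀ i) ∧ x ∈ assocSubspace G D} =
          Set.range Gᵀ := by
        ext x
        simp only [hWtop, Submodule.mem_top, and_true]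
        exact ⟨fun ⟨i, h⟩ => ⟨i, h.symm⟩, fun ⟨i, h⟩ => ⟨i, h.symm⟩⟩
      have hStop : Submodule.span F
          {x : Fin k → F | (∃ i : Fin n, x = Gᵀ i) ∧ x ∈ assocSubspace G D} = ⊤ := by
        rw [hset]
        apply Submodule.eq_top_of_finrank_eq
        show Module.finrank F (Submodule.span F (Set.range G.col)) = _
        rw [← Matrix.range_mulVecLin]
        have hr := Matrix.rank_transpose G
        unfold Matrix.rank at hr
        rw [Matrix.mulVecLin_transpose] at hr
        rw [← hr, hrank, hfinpi]
      rw [hStop, hWtop] at hVlt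
      exact lt_irrefl _ hVlt
    · -- l ≥ 1
      have hDne : D ≠ ⊥ := by
        intro h
        rw [h, finrank_bot] at hDl
        omega
      obtain ⟨v, hvD, hv0⟩ := (Submodule.ne_bot_iff D).mp hDne
      obtain ⟨i, hvi⟩ : ∃ i, v i ≠ 0 := by
        by_contra h
        push_neg at h
        exact hv0 (funext h)
      have hGiW : Gᵀ i ∉ assocSubspace G D := by
        intro hGi
        obtain ⟨m, hm⟩ := hD hvD
        have hmv : Matrix.vecMul m G = v := by
          rw [← Matrix.vecMulLinear_apply]; exact hm
        have h0 := hGi m (by rw [hmv]; exact hvD)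
        rw [← vecMul_coord, hmv] at h0
        exact hvi h0
      have hGi0 : Gᵀ i ≠ 0 := fun h => hGiW (h ▸ (assocSubspace G D).zero_mem)
      have hfrV : Module.finrank F (Submodule.span F
          {x : Fin k → F | (∃ i : Fin n, x = Gᵀ i) ∧ x ∈ assocSubspace G D}) < k - l := by
        rw [← hW]
        exact Submodule.finrank_lt_finrank_of_lt hVlt
      have hsup : Module.finrank F ↥(Submodule.span F
          {x : Fin k → F | (∃ i : Fin n, x = Gᵀ i) ∧ x ∈ assocSubspace G D} ⊔
          Submodule.span F {Gᵀ i}) ≤ k - l := by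
        have h1 := Submodule.finrank_sup_add_finrank_inf_eq (Submodule.span F
          {x : Fin k → F | (∃ i : Fin n, x = Gᵀ i) ∧ x ∈ assocSubspace G D})
          (Submodule.span F {Gᵀ i})
        have h2 := finrank_span_singleton (K := F) hGi0
        omega
      obtain ⟨W'', hleW'', hW''⟩ := exists_le_finrank_eq
        (Submodule.span F
          {x : Fin k → F | (∃ i : Fin n, x = Gᵀ i) ∧ x ∈ assocSubspace G D} ⊔
          Submodule.span F {Gᵀ i}) (k - l) hsup (by rw [hfinpi]; omega)
      have hD'le : Submodule.map G.vecMulLinear (perpSub W'') ≤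
          LinearMap.range G.vecMulLinear := LinearMap.map_le_range
      have hD'rank : Module.finrank F (Submodule.map G.vecMulLinear (perpSub W'')) = l := by
        have h := LinearEquiv.finrank_eq
          (Submodule.equivMapOfInjective G.vecMulLinear hinj (perpSub W''))
        rw [← h, finrank_perpSub, hW'']
        omega
      have hsuppD' : subcodeSupp (Submodule.map G.vecMulLinear (perpSub W'')) =
          {j | Gᵀ j ∉ W''} := by
        rw [supp_map_eq, perpSub_perpSub]
      refine hmin.2.2 _ hD'le hD'rank ?_
      rw [hsuppD, hsuppD']
      constructor
      · intro j hj
        simp only [Set.mem_setOf_eq] at hj ⊢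
        intro hjW
        apply hj
        apply hleW''
        exact Submodule.mem_sup_left (Submodule.subset_span ⟨⟨j, rfl⟩, hjW⟩)
      · intro hsub
        have hiD : i ∈ {i | Gᵀ i ∉ assocSubspace G D} := hGiW
        have hiD' := hsub hiD
        simp only [Set.mem_setOf_eq] at hiD'
        apply hiD'
        apply hleW''
        exact Submodule.mem_sup_right (Submodule.mem_span_singleton_self (Gᵀ i))
  · intro hspan
    refine ⟨hD, hDl, ?_⟩
    intro D' hD'le hD'l hss
    have hM'D : Submodule.map G.vecMulLinear (Submodule.comap G.vecMulLinear D') = D' := by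
      rw [Submodule.map_comap_eq]
      exact inf_eq_right.mpr hD'le
    have hM'l : Module.finrank F (Submodule.comap G.vecMulLinear D') = l := by
      have h := LinearEquiv.finrank_eq
        (Submodule.equivMapOfInjective G.vecMulLinear hinj (Submodule.comap G.vecMulLinear D'))
      rw [hM'D] at h
      rw [h, hD'l]
    have hsuppD' : subcodeSupp D' =
        {j | Gᵀ j ∉ perpSub (Submodule.comap G.vecMulLinear D')} := by
      conv_lhs => rw [← hM'D]
      rw [supp_map_eq]
    have hle : assocSubspace G D ≤ perpSub (Submodule.comap G.vecMulLinear D') := by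
      rw [← hspan]
      apply Submodule.span_le.mpr
      rintro x ⟨⟨j, rfl⟩, hxW⟩
      by_contra hxn
      have hj' : j ∈ subcodeSupp D' := by
        rw [hsuppD']
        exact hxn
      have hj := hss.1 hj'
      rw [hsuppD, Set.mem_setOf_eq] at hj
      exact hj hxW
    have hEq : assocSubspace G D = perpSub (Submodule.comap G.vecMulLinear D') :=
      Submodule.eq_of_le_of_finrank_eq hle (by rw [hW, finrank_perpSub, hM'l])
    have heq : subcodeSupp D' = subcodeSupp D := by
      rw [hsuppD', hsuppD, hEq]
    rw [heq] at hss
    exact ssubset_irrefl _ hss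
end
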